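/- arXiv:2603.21916 — 2 statements merged into one kernel-verified Lean document; each statement's English description precedes it below -/
import Mathlib

section
/- Let A ∈ ℝ^{K×d}, let Γ ∈ ℝ^{K×K} and C₀ ∈ ℝ^{d×d} be symmetric positive definite, let R: ℝ^d → (-∞,∞] be proper, closed, convex, lower semicontinuous with inf R > -∞, and let (x^{(j)}(t), t ≥ 0)_{j=1,…,J} and (z^{(j)}(t), t ≥ 0)_{j=1,…,J} be two solutions of the linear SEKI flow whose initial ensembles have equal positive definite empirical covariances: (1/J)∑_j (x₀^{(j)} − x̄₀)(x₀^{(j)} − x̄₀)ᵀ = (1/J)∑_j (z₀^{(j)} − z̄₀)(z₀^{(j)} − z̄₀)ᵀ. Then for all t ≥ 0 the empirical covariances coincide, C^x(t) = C^z(t) =: C(t), and the ensemble means satisfy the contraction estimate ‖x̄(t) − z̄(t)‖_{C(t)} ≤ ‖x̄₀ − z̄₀‖_{C(0)}, where ‖v‖_C := √(vᵀC⁻¹v). -/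
open Matrix MeasureTheory RealInnerProductSpace Filter

noncomputable section

/-- Matrix–vector multiplication, viewed as a map on Euclidean spaces. -/
def mulVecE {m n : ℕ} (M : Matrix (Fin m) (Fin n) ℝ) (v : EuclideanSpace ℝ (Fin n)) :
    EuclideanSpace ℝ (Fin m) :=
  WithLp.toLp 2 (fun i => ∑ j, M i j * v j)

/-- Ensemble mean `x̄ = (1/J) ∑ⱼ x⁽ʲ⁾`. -/
def emean {d J : ℕ} (x : Fin J → EuclideanSpace ℝ (Fin d)) : EuclideanSpace ℝ (Fin d) :=
  (J : ℝ)⁻¹ • ∑ j, x j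

/-- Empirical covariance `C(x) = (1/J) ∑ⱼ (x⁽ʲ⁾ - x̄)(x⁽ʲ⁾ - x̄)ᵀ`. -/
def ecov {d J : ℕ} (x : Fin J → EuclideanSpace ℝ (Fin d)) : Matrix (Fin d) (Fin d) ℝ :=
  (J : ℝ)⁻¹ • ∑ j, vecMulVec (fun i => (x j - emean x) i) (fun i => (x j - emean x) i)

/-- Convex subdifferential `∂R(x) = {ξ | ∀ z, R z ≥ R x + ⟪ξ, z - x⟫}`. -/
def subderiv {d : ℕ} (R : EuclideanSpace ℝ (Fin d) → ℝ) (x : EuclideanSpace ℝ (Fin d)) :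
    Set (EuclideanSpace ℝ (Fin d)) :=
  {ξ | ∀ z, R x + ⟪ξ, z - x⟫ ≤ R z}

/-- Squared weighted norm `‖v‖_C² = vᵀ C⁻¹ v`. -/
def wnormSq {d : ℕ} (C : Matrix (Fin d) (Fin d) ℝ) (v : EuclideanSpace ℝ (Fin d)) : ℝ :=
  ⟪v, mulVecE C⁻¹ v⟫

/-- Smallest eigenvalue of a symmetric matrix, via the Rayleigh quotient. -/
def lamMin {d : ℕ} (C : Matrix (Fin d) (Fin d) ℝ) : ℝ :=
  ⨅ v : {v : EuclideanSpace ℝ (Fin d) // ‖v‖ = 1}, ⟪mulVecE C v.1, v.1⟫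

/-- Largest eigenvalue of a symmetric matrix, via the Rayleigh quotient. -/
def lamMax {d : ℕ} (C : Matrix (Fin d) (Fin d) ℝ) : ℝ :=
  ⨆ v : {v : EuclideanSpace ℝ (Fin d) // ‖v‖ = 1}, ⟪mulVecE C v.1, v.1⟫

end

/-- A solution of the linear SEKI flow on `[0,∞)` (absolutely continuous trajectories with
a measurable selection `w(t) ∈ ∂R(x̄(t))`, written in integral form). -/
def IsSEKISolInf {d K J : ℕ} (A : Matrix (Fin K) (Fin d) ℝ) (Γ : Matrix (Fin K) (Fin K) ℝ)
    (C0 : Matrix (Fin d) (Fin d) ℝ) (y : EuclideanSpace ℝ (Fin K))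
    (R : EuclideanSpace ℝ (Fin d) → ℝ)
    (x : Fin J → ℝ → EuclideanSpace ℝ (Fin d)) : Prop :=
  (∀ j, ContinuousOn (x j) (Set.Ici 0)) ∧
  ∃ w : ℝ → EuclideanSpace ℝ (Fin d),
    (∀ T : ℝ, 0 ≤ T → IntervalIntegrable w MeasureTheory.volume 0 T) ∧
    (∀ᵐ s ∂(MeasureTheory.volume.restrict (Set.Ici (0 : ℝ))),
      w s ∈ subderiv R (emean (fun j => x j s))) ∧
    (∀ t : ℝ, 0 ≤ t →
      emean (fun j => x j t) = emean (fun j => x j 0) +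
        ∫ s in (0 : ℝ)..t,
          -(mulVecE (ecov (fun j => x j s))
            (mulVecE (Aᵀ * Γ⁻¹) (mulVecE A (emean (fun j => x j s)) - y) +
              mulVecE C0⁻¹ (emean (fun j => x j s)) + w s))) ∧
    (∀ j, ∀ t : ℝ, 0 ≤ t →
      x j t - emean (fun j' => x j' t) = x j 0 - emean (fun j' => x j' 0) +
        ∫ s in (0 : ℝ)..t,
          -(mulVecE (ecov (fun j' => x j' s) * (Aᵀ * Γ⁻¹ * A + C0⁻¹))
              (x j s - emean (fun j' => x j' s))))

section SekiHelpers

open Set intervalIntegral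

attribute [local instance] Matrix.linftyOpNormedAddCommGroup Matrix.linftyOpNormedSpace
  Matrix.linftyOpNormedRing Matrix.linftyOpNormedAlgebra

variable {d : ℕ}

local notation "E" => EuclideanSpace ℝ (Fin d)
local notation "Mat" => Matrix (Fin d) (Fin d) ℝ

lemma seki_inner_eq_sum (u v : E) : ⟪u, v⟫ = ∑ i, u i * v i := by
  simp [PiLp.inner_apply, RCLike.inner_apply, conj_trivial, mul_comm]

lemma seki_mulVecE_matrix_add (M N : Mat) (v : E) :
    mulVecE (M + N) v = mulVecE M v + mulVecE N v := by
  ext i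
  simp [mulVecE, add_mul, Finset.sum_add_distrib]

lemma seki_mulVecE_matrix_smul (c : ℝ) (M : Mat) (v : E) :
    mulVecE (c • M) v = c • mulVecE M v := by
  ext i
  simp [mulVecE, Finset.mul_sum, mul_assoc]

lemma seki_mulVecE_mulVecE {m n p : ℕ} (M : Matrix (Fin m) (Fin n) ℝ)
    (N : Matrix (Fin n) (Fin p) ℝ) (v : EuclideanSpace ℝ (Fin p)) :
    mulVecE M (mulVecE N v) = mulVecE (M * N) v := by
  ext i
  simp only [mulVecE, Matrix.mul_apply, Finset.sum_mul, Finset.mul_sum]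
  rw [Finset.sum_comm]
  congr 1; ext j; congr 1; ext k; ring

lemma seki_mulVecE_one (v : E) : mulVecE (1 : Mat) v = v := by
  ext i
  simp [mulVecE, Matrix.one_apply]

lemma seki_mulVecE_add {m n : ℕ} (M : Matrix (Fin m) (Fin n) ℝ)
    (v w : EuclideanSpace ℝ (Fin n)) :
    mulVecE M (v + w) = mulVecE M v + mulVecE M w := by
  ext i
  simp [mulVecE, mul_add, Finset.sum_add_distrib]

lemma seki_mulVecE_sub {m n : ℕ} (M : Matrix (Fin m) (Fin n) ℝ)
    (v w : EuclideanSpace ℝ (Fin n)) :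
    mulVecE M (v - w) = mulVecE M v - mulVecE M w := by
  ext i
  simp [mulVecE, mul_sub, Finset.sum_sub_distrib]

lemma seki_mulVecE_neg {m n : ℕ} (M : Matrix (Fin m) (Fin n) ℝ)
    (v : EuclideanSpace ℝ (Fin n)) : mulVecE M (-v) = -mulVecE M v := by
  ext i
  simp [mulVecE, Finset.sum_neg_distrib]

lemma seki_mulVecE_smul {m n : ℕ} (M : Matrix (Fin m) (Fin n) ℝ) (c : ℝ)
    (v : EuclideanSpace ℝ (Fin n)) :
    mulVecE M (c • v) = c • mulVecE M v := by
  ext i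
  simp [mulVecE, Finset.mul_sum]
  congr 1; ext j; ring

lemma seki_inner_mulVecE_left {m n : ℕ} (M : Matrix (Fin m) (Fin n) ℝ)
    (u : EuclideanSpace ℝ (Fin n)) (v : EuclideanSpace ℝ (Fin m)) :
    ⟪mulVecE M u, v⟫ = ⟪u, mulVecE Mᵀ v⟫ := by
  simp only [seki_inner_eq_sum, mulVecE, Finset.sum_mul, Finset.mul_sum, Matrix.transpose_apply]
  rw [Finset.sum_comm]
  congr 1; ext j; congr 1; ext i; ring

/-- `mulVecE` as a linear map. -/
def seki_mulVecLin {m n : ℕ} (M : Matrix (Fin m) (Fin n) ℝ) :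
    EuclideanSpace ℝ (Fin n) →ₗ[ℝ] EuclideanSpace ℝ (Fin m) where
  toFun := fun v => mulVecE M v
  map_add' := seki_mulVecE_add M
  map_smul' := fun c v => seki_mulVecE_smul M c v

/-- `mulVecE` as a continuous linear map. -/
noncomputable def seki_mulVecCLM {m n : ℕ} (M : Matrix (Fin m) (Fin n) ℝ) :
    EuclideanSpace ℝ (Fin n) →L[ℝ] EuclideanSpace ℝ (Fin m) :=
  LinearMap.toContinuousLinearMap (seki_mulVecLin M)

@[simp] lemma seki_mulVecCLM_apply {m n : ℕ} (M : Matrix (Fin m) (Fin n) ℝ)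
    (v : EuclideanSpace ℝ (Fin n)) : seki_mulVecCLM M v = mulVecE M v := rfl

/-- `mulVecE` as a continuous bilinear map. -/
noncomputable def seki_mulVecCLM2 : Mat →L[ℝ] E →L[ℝ] E :=
  LinearMap.toContinuousLinearMap
    { toFun := fun M => seki_mulVecCLM M
      map_add' := fun M N => by
        ext v
        simp [seki_mulVecCLM, seki_mulVecLin, seki_mulVecE_matrix_add]
      map_smul' := fun c M => by
        ext v
        simp [seki_mulVecCLM, seki_mulVecLin, seki_mulVecE_matrix_smul] }

@[simp] lemma seki_mulVecCLM2_apply (M : Mat) (v : E) : seki_mulVecCLM2 M v = mulVecE M v := rfl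

lemma seki_vecMulVec_add_left (v w u : E) :
    Matrix.vecMulVec (fun i => (v + w) i) (fun i => u i)
      = Matrix.vecMulVec v u + Matrix.vecMulVec w u := by
  ext i j
  simp [Matrix.vecMulVec_apply, add_mul]

/-- outer product as a continuous bilinear map. -/
noncomputable def seki_outerCLM2 : E →L[ℝ] E →L[ℝ] Mat :=
  LinearMap.toContinuousLinearMap
    { toFun := fun v =>
        LinearMap.toContinuousLinearMap
          { toFun := fun w => Matrix.vecMulVec (fun i => v i) (fun i => w i)
            map_add' := fun w u => by
              ext i j
              simp [Matrix.vecMulVec_apply, mul_add]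
            map_smul' := fun c w => by
              ext i j
              simp [Matrix.vecMulVec_apply]
              ring }
      map_add' := fun v w => by
        ext u i j
        simp [Matrix.vecMulVec_apply, add_mul]
      map_smul' := fun c v => by
        ext u i j
        simp [Matrix.vecMulVec_apply]
        ring }

@[simp] lemma seki_outerCLM2_apply (v w : E) :
    seki_outerCLM2 v w = Matrix.vecMulVec (fun i => v i) (fun i => w i) := rfl

end SekiHelpers
section SekiHelpers2

open Set intervalIntegral MeasureTheory Interval

attribute [local instance] Matrix.linftyOpNormedAddCommGroup Matrix.linftyOpNormedSpace
  Matrix.linftyOpNormedRing Matrix.linftyOpNormedAlgebra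

variable {d : ℕ}

local notation "E" => EuclideanSpace ℝ (Fin d)
local notation "Mat" => Matrix (Fin d) (Fin d) ℝ

lemma seki_transpose_of_hermitian {M : Mat} (h : M.IsHermitian) : Mᵀ = M := by
  rw [← Matrix.conjTranspose_eq_transpose_of_trivial]
  exact h

lemma seki_vecMulVec_transpose (v w : Fin d → ℝ) :
    (Matrix.vecMulVec v w)ᵀ = Matrix.vecMulVec w v := by
  ext i j
  simp [Matrix.vecMulVec_apply, mul_comm]

lemma seki_ecov_transpose {J : ℕ} (x : Fin J → E) : (ecov x)ᵀ = ecov x := by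
  unfold ecov
  rw [Matrix.transpose_smul, Matrix.transpose_sum]
  congr 1
  refine Finset.sum_congr rfl fun j _ => ?_
  exact seki_vecMulVec_transpose _ _

lemma seki_vecMulVec_mulVecE_left (M : Mat) (v w : E) :
    Matrix.vecMulVec (fun i => mulVecE M v i) (fun i => w i) = M * Matrix.vecMulVec v w := by
  ext i j
  simp [Matrix.vecMulVec_apply, mulVecE, Matrix.mul_apply, Finset.sum_mul, mul_assoc]

lemma seki_vecMulVec_mulVecE_right (M : Mat) (v w : E) :
    Matrix.vecMulVec (fun i => v i) (fun i => mulVecE M w i)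
      = Matrix.vecMulVec v w * Mᵀ := by
  ext i j
  simp only [Matrix.vecMulVec_apply, mulVecE, Matrix.mul_apply, Matrix.transpose_apply,
    Finset.mul_sum]
  congr 1; ext k; ring

/-- Interval integrability of a bilinear pairing of a continuous function with an
interval integrable function. -/
lemma seki_II_bilin {F G H : Type*} [NormedAddCommGroup F] [NormedSpace ℝ F]
    [NormedAddCommGroup G] [NormedSpace ℝ G] [NormedAddCommGroup H] [NormedSpace ℝ H]
    (B : F →L[ℝ] G →L[ℝ] H) {φ : ℝ → F} {w : ℝ → G} {a b : ℝ}
    (hφ : ContinuousOn φ (Set.uIcc a b))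
    (hw : IntervalIntegrable w MeasureTheory.volume a b) :
    IntervalIntegrable (fun s => B (φ s) (w s)) MeasureTheory.volume a b := by
  rw [intervalIntegrable_iff] at hw ⊢
  obtain ⟨Cφ, hCφ⟩ := isCompact_uIcc.exists_bound_of_continuousOn hφ
  have h1 : AEStronglyMeasurable φ (volume.restrict (Ι a b)) :=
    (hφ.mono Set.uIoc_subset_uIcc).aestronglyMeasurable measurableSet_uIoc
  have hmeas : AEStronglyMeasurable (fun s => B (φ s) (w s)) (volume.restrict (Ι a b)) := by
    have h2 : AEStronglyMeasurable (fun s => (B (φ s), w s)) (volume.restrict (Ι a b)) :=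
      ((B.continuous.comp_aestronglyMeasurable h1)).prodMk hw.aestronglyMeasurable
    exact isBoundedBilinearMap_apply.continuous.comp_aestronglyMeasurable h2
  refine Integrable.mono' ((hw.norm.const_mul (‖B‖ * (|Cφ| + 1)))) hmeas ?_
  filter_upwards [ae_restrict_mem measurableSet_uIoc] with s hs
  calc ‖B (φ s) (w s)‖ ≤ ‖B‖ * ‖φ s‖ * ‖w s‖ := B.le_opNorm₂ _ _
    _ ≤ ‖B‖ * (|Cφ| + 1) * ‖w s‖ := by
        have h3 : ‖φ s‖ ≤ |Cφ| + 1 :=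
          (hCφ s (Set.uIoc_subset_uIcc hs)).trans ((le_abs_self _).trans (by linarith))
        have h4 : (0:ℝ) ≤ ‖w s‖ := norm_nonneg _
        have h5 : (0:ℝ) ≤ ‖B‖ := B.opNorm_nonneg
        exact mul_le_mul_of_nonneg_right (mul_le_mul_of_nonneg_left h3 h5) h4

/-- real inner product as a continuous bilinear map. -/
noncomputable def seki_innerCLM2 : E →L[ℝ] E →L[ℝ] ℝ :=
  LinearMap.toContinuousLinearMap
    { toFun := fun v =>
        LinearMap.toContinuousLinearMap
          { toFun := fun w => ⟪v, w⟫
            map_add' := fun w u => inner_add_right v w u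
            map_smul' := fun c w => real_inner_smul_right v w c }
      map_add' := fun v w => by
        ext u
        simpa using inner_add_left v w u
      map_smul' := fun c v => by
        ext u
        simpa using real_inner_smul_left v u c }

@[simp] lemma seki_innerCLM2_apply (v w : E) : seki_innerCLM2 v w = ⟪v, w⟫ := rfl

/-- The inner product version. -/
lemma seki_II_inner {w : ℝ → E} {F : ℝ → E} {a b : ℝ}
    (hF : ContinuousOn F (Set.uIcc a b))
    (hw : IntervalIntegrable w MeasureTheory.volume a b) :
    IntervalIntegrable (fun s => ⟪w s, F s⟫) MeasureTheory.volume a b := by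
  have h := seki_II_bilin seki_innerCLM2 hF hw
  have heq : (fun s => ⟪w s, F s⟫) = fun s => seki_innerCLM2 (F s) (w s) := by
    funext s
    exact real_inner_comm (F s) (w s)
  rw [heq]
  exact h

end SekiHelpers2
section SekiMaster

open Set intervalIntegral MeasureTheory Interval

variable {d : ℕ}

local notation "E" => EuclideanSpace ℝ (Fin d)
local notation "Mat" => Matrix (Fin d) (Fin d) ℝ

set_option maxHeartbeats 1000000 in
/-- FTC for the quadratic form `⟪u t, (Q0 + t Q1) u t⟫` along an absolutely continuous curve
`u t = u 0 + ∫₀ᵗ g`. -/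
lemma seki_master {T : ℝ} (hT : 0 ≤ T) (g u : ℝ → EuclideanSpace ℝ (Fin d))
    (Q0 Q1 : Matrix (Fin d) (Fin d) ℝ)
    (hQ0sym : Q0ᵀ = Q0) (hQ1sym : Q1ᵀ = Q1)
    (hg : IntervalIntegrable g MeasureTheory.volume 0 T)
    (hu : ContinuousOn u (Icc 0 T))
    (huu : ∀ t ∈ Icc 0 T, u t = u 0 + ∫ s in (0:ℝ)..t, g s) :
    ∀ t ∈ Icc 0 T,
      ⟪u t, mulVecE (Q0 + t • Q1) (u t)⟫
        = ⟪u 0, mulVecE Q0 (u 0)⟫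
          + ∫ s in (0:ℝ)..t,
              (2 * ⟪g s, mulVecE (Q0 + s • Q1) (u s)⟫ + ⟪u s, mulVecE Q1 (u s)⟫) := by
  have hmem0 : (0:ℝ) ∈ Icc (0:ℝ) T := ⟨le_refl 0, hT⟩
  set Q : ℝ → Mat := fun s => Q0 + s • Q1 with hQdef
  set F : ℝ → E := fun s => mulVecE (Q s) (u s) with hFdef
  set f : ℝ → ℝ := fun s => ⟪u s, F s⟫ with hfdef
  set G : ℝ → ℝ := fun s => ⟪u s, mulVecE Q1 (u s)⟫ with hGdef
  set h : ℝ → ℝ := fun s => 2 * ⟪g s, F s⟫ + G s with hhdef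
  have huIcc : Set.uIcc (0:ℝ) T = Icc 0 T := uIcc_of_le hT
  have hsubIcc : ∀ a b : ℝ, a ∈ Icc 0 T → b ∈ Icc 0 T → uIcc a b ⊆ Icc 0 T := by
    intro a b ha hb
    have h1 : uIcc a b ⊆ uIcc 0 T :=
      uIcc_subset_uIcc (by rw [huIcc]; exact ha) (by rw [huIcc]; exact hb)
    rwa [huIcc] at h1
  have hgsub : ∀ a b : ℝ, a ∈ Icc 0 T → b ∈ Icc 0 T → IntervalIntegrable g volume a b := by
    intro a b ha hb
    refine hg.mono_set ?_
    rw [huIcc]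
    exact hsubIcc a b ha hb
  have hgnsub : ∀ a b : ℝ, a ∈ Icc 0 T → b ∈ Icc 0 T →
      IntervalIntegrable (fun s => ‖g s‖) volume a b := fun a b ha hb => (hgsub a b ha hb).norm
  have hQcont : Continuous Q := continuous_const.add (continuous_id.smul continuous_const)
  have hFcont : ContinuousOn F (Icc 0 T) := by
    have h1 : ContinuousOn (fun s => seki_mulVecCLM2 (Q s)) (Icc 0 T) :=
      (seki_mulVecCLM2.continuous.comp hQcont).continuousOn
    exact h1.clm_apply hu
  have hGcont : ContinuousOn G (Icc 0 T) := by
    have h1 : ContinuousOn (fun s => mulVecE Q1 (u s)) (Icc 0 T) :=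
      (seki_mulVecCLM Q1).continuous.comp_continuousOn hu
    exact hu.inner h1
  have hδ : ∀ a b : ℝ, a ∈ Icc 0 T → b ∈ Icc 0 T → u b - u a = ∫ s in a..b, g s := by
    intro a b ha hb
    have h2 : (∫ s in (0:ℝ)..b, g s) = (∫ s in (0:ℝ)..a, g s) + ∫ s in a..b, g s :=
      (integral_add_adjacent_intervals (hgsub 0 a hmem0 ha) (hgsub a b ha hb)).symm
    rw [huu a ha, huu b hb, h2]
    abel
  have hIF : ∀ a b : ℝ, a ∈ Icc 0 T → b ∈ Icc 0 T →
      IntervalIntegrable (fun s => ⟪g s, F s⟫) volume a b := fun a b ha hb =>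
    seki_II_inner (hFcont.mono (hsubIcc a b ha hb)) (hgsub a b ha hb)
  have hIG : ∀ a b : ℝ, a ∈ Icc 0 T → b ∈ Icc 0 T → IntervalIntegrable G volume a b :=
    fun a b ha hb => (hGcont.mono (hsubIcc a b ha hb)).intervalIntegrable
  have hhint : ∀ a b : ℝ, a ∈ Icc 0 T → b ∈ Icc 0 T → IntervalIntegrable h volume a b := by
    intro a b ha hb
    exact ((hIF a b ha hb).const_mul 2).add (hIG a b ha hb)
  -- the key local estimate
  have main : ∀ ε : ℝ, 0 < ε → ∃ m : ℝ, 0 < m ∧ ∀ a b : ℝ, a ∈ Icc 0 T → b ∈ Icc 0 T →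
      a ≤ b → b - a ≤ m →
      |(f b - f a) - ∫ s in a..b, h s| ≤ ε * ((∫ s in a..b, ‖g s‖) + (b - a)) := by
    intro ε hε
    obtain ⟨Mu, hMu⟩ := isCompact_Icc.exists_bound_of_continuousOn hu
    have hMu0 : 0 ≤ Mu := le_trans (norm_nonneg (u 0)) (hMu 0 hmem0)
    set LQ : ℝ := ‖seki_mulVecCLM Q1‖ with hLQ
    have hLQ0 : 0 ≤ LQ := norm_nonneg _
    set CQ : ℝ := LQ * Mu + 1 with hCQ
    have hCQ0 : 0 < CQ := by positivity
    have hFuc := isCompact_Icc.uniformContinuousOn_of_continuous hFcont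
    rw [Metric.uniformContinuousOn_iff] at hFuc
    obtain ⟨δ₁, hδ₁, hF1⟩ := hFuc (ε/2) (by positivity)
    have huuc := isCompact_Icc.uniformContinuousOn_of_continuous hu
    rw [Metric.uniformContinuousOn_iff] at huuc
    obtain ⟨δ₂, hδ₂, hu1⟩ := huuc (ε/(2*CQ)) (by positivity)
    refine ⟨min (δ₁/2) (δ₂/2), by positivity, ?_⟩
    intro a b ha hb hab hm
    have hm1 : b - a < δ₁ := lt_of_le_of_lt (hm.trans (min_le_left _ _)) (by linarith)
    have hm2 : b - a < δ₂ := lt_of_le_of_lt (hm.trans (min_le_right _ _)) (by linarith)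
    have hδv : u b - u a = ∫ s in a..b, g s := hδ a b ha hb
    have hQasym : ∀ s : ℝ, (Q s)ᵀ = Q s := by
      intro s
      show (Q0 + s • Q1)ᵀ = Q0 + s • Q1
      rw [Matrix.transpose_add, Matrix.transpose_smul, hQ0sym, hQ1sym]
    have e1 : F b - F a = mulVecE (Q0 + a • Q1) (u b - u a) + (b - a) • mulVecE Q1 (u b) := by
      show mulVecE (Q0 + b • Q1) (u b) - mulVecE (Q0 + a • Q1) (u a) = _
      simp only [seki_mulVecE_matrix_add, seki_mulVecE_matrix_smul, seki_mulVecE_sub]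
      module
    have e2 : ⟪u a, mulVecE (Q0 + a • Q1) (u b - u a)⟫ = ⟪u b - u a, F a⟫ := by
      rw [real_inner_comm, seki_inner_mulVecE_left, Matrix.transpose_add, Matrix.transpose_smul,
        hQ0sym, hQ1sym]
    have key1 : f b - f a
        = ⟪u b - u a, F b⟫ + ((b - a) * ⟪u a, mulVecE Q1 (u b)⟫ + ⟪u b - u a, F a⟫) := by
      have e3 : f b - f a = ⟪u b - u a, F b⟫ + ⟪u a, F b - F a⟫ := by
        show ⟪u b, F b⟫ - ⟪u a, F a⟫ = _
        rw [inner_sub_left, inner_sub_right]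
        ring
      rw [e3, e1, inner_add_right, real_inner_smul_right, e2]
      ring
    have hinta : ∀ c : EuclideanSpace ℝ (Fin d), ⟪u b - u a, c⟫ = ∫ s in a..b, ⟪g s, c⟫ := by
      intro c
      calc ⟪u b - u a, c⟫ = ⟪c, u b - u a⟫ := real_inner_comm _ _
        _ = seki_innerCLM2 c (∫ s in a..b, g s) := by
            rw [hδv]
            exact (seki_innerCLM2_apply c _).symm
        _ = ∫ s in a..b, seki_innerCLM2 c (g s) :=
            ((seki_innerCLM2 c).intervalIntegral_comp_comm (hgsub a b ha hb)).symm
        _ = ∫ s in a..b, ⟪g s, c⟫ :=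
            intervalIntegral.integral_congr fun s _ =>
              (seki_innerCLM2_apply c (g s)).trans (real_inner_comm (g s) c)
    have hconst : ∀ r : ℝ, (b - a) * r = ∫ _ in a..b, r := by
      intro r
      rw [intervalIntegral.integral_const, smul_eq_mul]
    have hIc : ∀ c : EuclideanSpace ℝ (Fin d),
        IntervalIntegrable (fun s => ⟪g s, c⟫) volume a b := fun c =>
      seki_II_inner continuousOn_const (hgsub a b ha hb)
    have key2 : (f b - f a) - ∫ s in a..b, h s
        = ∫ s in a..b,
            (⟪g s, F b - F s⟫ + ⟪g s, F a - F s⟫ + (⟪u a, mulVecE Q1 (u b)⟫ - G s)) := by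
      rw [key1, hinta (F b), hinta (F a), hconst (⟪u a, mulVecE Q1 (u b)⟫)]
      rw [← intervalIntegral.integral_add intervalIntegrable_const (hIc (F a))]
      rw [← intervalIntegral.integral_add (hIc (F b)) (intervalIntegrable_const.add (hIc (F a)))]
      rw [← intervalIntegral.integral_sub
        ((hIc (F b)).add (intervalIntegrable_const.add (hIc (F a)))) (hhint a b ha hb)]
      refine intervalIntegral.integral_congr fun s _ => ?_
      show ⟪g s, F b⟫ + (⟪u a, mulVecE Q1 (u b)⟫ + ⟪g s, F a⟫) - (2 * ⟪g s, F s⟫ + G s) = _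
      rw [inner_sub_right, inner_sub_right]
      ring
    have hbound : ∀ s, s ∈ Ι a b →
        |⟪g s, F b - F s⟫ + ⟪g s, F a - F s⟫ + (⟪u a, mulVecE Q1 (u b)⟫ - G s)|
          ≤ ε * ‖g s‖ + ε := by
      intro s hs
      rw [uIoc_of_le hab] at hs
      have hsa : a ≤ s := le_of_lt hs.1
      have hsb : s ≤ b := hs.2
      have hsmem : s ∈ Icc 0 T := ⟨ha.1.trans hsa, hsb.trans hb.2⟩
      have hF_b : ‖F b - F s‖ ≤ ε/2 := by
        have hd : dist b s < δ₁ := by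
          rw [Real.dist_eq, abs_of_nonneg (by linarith)]
          linarith
        rw [← dist_eq_norm]
        exact (hF1 b hb s hsmem hd).le
      have hF_a : ‖F a - F s‖ ≤ ε/2 := by
        have hd : dist a s < δ₁ := by
          rw [Real.dist_eq, abs_of_nonpos (by linarith)]
          linarith
        rw [← dist_eq_norm]
        exact (hF1 a ha s hsmem hd).le
      have hua : ‖u a - u s‖ ≤ ε/(2*CQ) := by
        have hd : dist a s < δ₂ := by
          rw [Real.dist_eq, abs_of_nonpos (by linarith)]
          linarith
        rw [← dist_eq_norm]
        exact (hu1 a ha s hsmem hd).le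
      have hub : ‖u b - u s‖ ≤ ε/(2*CQ) := by
        have hd : dist b s < δ₂ := by
          rw [Real.dist_eq, abs_of_nonneg (by linarith)]
          linarith
        rw [← dist_eq_norm]
        exact (hu1 b hb s hsmem hd).le
      have h3 : ⟪u a, mulVecE Q1 (u b)⟫ - G s
          = ⟪u a - u s, mulVecE Q1 (u b)⟫ + ⟪u s, mulVecE Q1 (u b - u s)⟫ := by
        show _ - ⟪u s, mulVecE Q1 (u s)⟫ = _
        rw [seki_mulVecE_sub, inner_sub_left, inner_sub_right]
        ring
      have hQ1b : ‖mulVecE Q1 (u b)‖ ≤ LQ * Mu := by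
        calc ‖mulVecE Q1 (u b)‖ = ‖seki_mulVecCLM Q1 (u b)‖ := rfl
          _ ≤ LQ * ‖u b‖ := (seki_mulVecCLM Q1).le_opNorm _
          _ ≤ LQ * Mu := mul_le_mul_of_nonneg_left (hMu b hb) hLQ0
      have hQ1d : ‖mulVecE Q1 (u b - u s)‖ ≤ LQ * (ε/(2*CQ)) := by
        calc ‖mulVecE Q1 (u b - u s)‖ = ‖seki_mulVecCLM Q1 (u b - u s)‖ := rfl
          _ ≤ LQ * ‖u b - u s‖ := (seki_mulVecCLM Q1).le_opNorm _
          _ ≤ LQ * (ε/(2*CQ)) := mul_le_mul_of_nonneg_left hub hLQ0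
      have h3b : |⟪u a, mulVecE Q1 (u b)⟫ - G s| ≤ ε := by
        rw [h3]
        have hle : LQ * Mu ≤ CQ := by rw [hCQ]; linarith
        calc |⟪u a - u s, mulVecE Q1 (u b)⟫ + ⟪u s, mulVecE Q1 (u b - u s)⟫|
            ≤ |⟪u a - u s, mulVecE Q1 (u b)⟫| + |⟪u s, mulVecE Q1 (u b - u s)⟫| := abs_add_le _ _
          _ ≤ ‖u a - u s‖ * (LQ * Mu) + ‖u s‖ * (LQ * (ε/(2*CQ))) := by
              refine add_le_add ?_ ?_
              · exact (abs_real_inner_le_norm _ _).trans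
                  (mul_le_mul_of_nonneg_left hQ1b (norm_nonneg _))
              · exact (abs_real_inner_le_norm _ _).trans
                  (mul_le_mul_of_nonneg_left hQ1d (norm_nonneg _))
          _ ≤ (ε/(2*CQ)) * (LQ * Mu) + Mu * (LQ * (ε/(2*CQ))) := by
              refine add_le_add ?_ ?_
              · exact mul_le_mul_of_nonneg_right hua (by positivity)
              · exact mul_le_mul_of_nonneg_right (hMu s hsmem) (by positivity)
          _ = (LQ * Mu) * ε / CQ := by
              field_simp
              ring
          _ ≤ ε := by
              rw [div_le_iff₀ hCQ0]
              nlinarith [hε.le]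
      have h1b : |⟪g s, F b - F s⟫| ≤ ‖g s‖ * (ε/2) :=
        (abs_real_inner_le_norm _ _).trans (mul_le_mul_of_nonneg_left hF_b (norm_nonneg _))
      have h2b : |⟪g s, F a - F s⟫| ≤ ‖g s‖ * (ε/2) :=
        (abs_real_inner_le_norm _ _).trans (mul_le_mul_of_nonneg_left hF_a (norm_nonneg _))
      calc |⟪g s, F b - F s⟫ + ⟪g s, F a - F s⟫ + (⟪u a, mulVecE Q1 (u b)⟫ - G s)|
          ≤ |⟪g s, F b - F s⟫ + ⟪g s, F a - F s⟫| + |⟪u a, mulVecE Q1 (u b)⟫ - G s| :=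
            abs_add_le _ _
        _ ≤ |⟪g s, F b - F s⟫| + |⟪g s, F a - F s⟫| + |⟪u a, mulVecE Q1 (u b)⟫ - G s| := by
            have := abs_add_le (⟪g s, F b - F s⟫) (⟪g s, F a - F s⟫)
            linarith
        _ ≤ ε * ‖g s‖ + ε := by linarith
    rw [key2]
    have hbint : IntervalIntegrable (fun s => ε * ‖g s‖ + ε) volume a b :=
      ((hgnsub a b ha hb).const_mul ε).add intervalIntegrable_const
    have h5 : ‖∫ s in a..b,
        (⟪g s, F b - F s⟫ + ⟪g s, F a - F s⟫ + (⟪u a, mulVecE Q1 (u b)⟫ - G s))‖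
        ≤ |∫ s in a..b, (ε * ‖g s‖ + ε)| := by
      refine intervalIntegral.norm_integral_le_abs_of_norm_le ?_ hbint
      filter_upwards [ae_restrict_mem measurableSet_uIoc] with s hs
      simpa [Real.norm_eq_abs] using hbound s hs
    have h6 : (∫ s in a..b, (ε * ‖g s‖ + ε)) = ε * (∫ s in a..b, ‖g s‖) + ε * (b - a) := by
      rw [intervalIntegral.integral_add ((hgnsub a b ha hb).const_mul ε) intervalIntegrable_const,
        intervalIntegral.integral_const_mul, intervalIntegral.integral_const, smul_eq_mul]
      ring
    have h7 : 0 ≤ ∫ s in a..b, (ε * ‖g s‖ + ε) :=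
      intervalIntegral.integral_nonneg hab (fun s _ => by positivity)
    calc |∫ s in a..b,
        (⟪g s, F b - F s⟫ + ⟪g s, F a - F s⟫ + (⟪u a, mulVecE Q1 (u b)⟫ - G s))|
        ≤ |∫ s in a..b, (ε * ‖g s‖ + ε)| := by
          rw [← Real.norm_eq_abs]
          exact h5
      _ = ∫ s in a..b, (ε * ‖g s‖ + ε) := abs_of_nonneg h7
      _ = ε * (∫ s in a..b, ‖g s‖) + ε * (b - a) := h6
      _ = ε * ((∫ s in a..b, ‖g s‖) + (b - a)) := by ring
  -- telescoping
  have hf0 : f 0 = ⟪u 0, mulVecE Q0 (u 0)⟫ := by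
    show ⟪u 0, mulVecE (Q0 + (0:ℝ) • Q1) (u 0)⟫ = _
    rw [zero_smul, add_zero]
  intro t ht
  rw [← hf0]
  change f t = f 0 + ∫ s in (0:ℝ)..t, h s
  rcases eq_or_lt_of_le ht.1 with h0 | h0
  · rw [← h0]
    simp
  · have hcge : 0 ≤ ∫ s in (0:ℝ)..t, ‖g s‖ :=
      intervalIntegral.integral_nonneg ht.1 (fun s _ => norm_nonneg _)
    set c : ℝ := (∫ s in (0:ℝ)..t, ‖g s‖) + t with hcdef
    have hc0 : 0 ≤ c := add_nonneg hcge ht.1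
    have habs : ∀ ε : ℝ, 0 < ε → |f t - f 0 - ∫ s in (0:ℝ)..t, h s| ≤ ε * c := by
      intro ε hε
      obtain ⟨m, hm, hstep⟩ := main ε hε
      set n : ℕ := max 1 ⌈t / m⌉₊ with hndef
      have hn1 : 1 ≤ n := le_max_left _ _
      have hn0' : 0 < n := lt_of_lt_of_le Nat.zero_lt_one hn1
      have hn0 : (0:ℝ) < n := by exact_mod_cast hn0'
      have hnm : t / m ≤ (n:ℝ) := by
        calc t / m ≤ (⌈t / m⌉₊ : ℝ) := Nat.le_ceil _
          _ ≤ (n:ℝ) := by exact_mod_cast le_max_right _ _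
      have htn : t / n ≤ m := by
        rw [div_le_iff₀ hn0]
        have h1 : m * (t / m) ≤ m * n := mul_le_mul_of_nonneg_left hnm hm.le
        have h2 : m * (t / m) = t := by field_simp
        linarith
      have htn0 : 0 ≤ t / n := div_nonneg ht.1 hn0.le
      set p : ℕ → ℝ := fun i => (i:ℝ) * (t / n) with hpdef
      have hp0 : p 0 = 0 := by simp [hpdef]
      have hpn : p n = t := by
        rw [hpdef]
        field_simp
      have hpstep : ∀ i : ℕ, p (i+1) - p i = t / n := by
        intro i
        simp only [hpdef]
        push_cast
        ring
      have hpmem : ∀ i : ℕ, i ≤ n → p i ∈ Icc (0:ℝ) T := by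
        intro i hi
        have hin : (i:ℝ) ≤ (n:ℝ) := by exact_mod_cast hi
        have h1 : (0:ℝ) ≤ p i := mul_nonneg (Nat.cast_nonneg i) htn0
        have h2 : p i ≤ t := by
          have h3 := mul_le_mul_of_nonneg_right hin htn0
          have hnt : (n:ℝ) * (t / n) = t := by field_simp
          simpa [hpdef, hnt] using h3
        exact ⟨h1, h2.trans ht.2⟩
      have hple : ∀ i : ℕ, p i ≤ p (i+1) := by
        intro i
        have := hpstep i
        linarith
      have htele_f : ∑ i ∈ Finset.range n, (f (p (i+1)) - f (p i)) = f t - f 0 := by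
        rw [Finset.sum_range_sub (fun i => f (p i))]
        rw [hpn, hp0]
      have hint_each : ∀ i : ℕ, i < n → IntervalIntegrable h volume (p i) (p (i+1)) :=
        fun i hi => hhint _ _ (hpmem i hi.le) (hpmem (i+1) hi)
      have hgint_each : ∀ i : ℕ, i < n → IntervalIntegrable (fun s => ‖g s‖) volume (p i) (p (i+1)) :=
        fun i hi => hgnsub _ _ (hpmem i hi.le) (hpmem (i+1) hi)
      have htele_h : ∑ i ∈ Finset.range n, ∫ s in p i..p (i+1), h s = ∫ s in (0:ℝ)..t, h s := by
        rw [intervalIntegral.sum_integral_adjacent_intervals hint_each, hp0, hpn]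
      have htele_g : ∑ i ∈ Finset.range n, ∫ s in p i..p (i+1), ‖g s‖
          = ∫ s in (0:ℝ)..t, ‖g s‖ := by
        rw [intervalIntegral.sum_integral_adjacent_intervals hgint_each, hp0, hpn]
      have htele_p : ∑ i ∈ Finset.range n, (p (i+1) - p i) = t := by
        rw [Finset.sum_range_sub (fun i => p i), hpn, hp0, sub_zero]
      calc |f t - f 0 - ∫ s in (0:ℝ)..t, h s|
          = |∑ i ∈ Finset.range n,
              ((f (p (i+1)) - f (p i)) - ∫ s in p i..p (i+1), h s)| := by
            rw [Finset.sum_sub_distrib, htele_f, htele_h]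
        _ ≤ ∑ i ∈ Finset.range n,
              |(f (p (i+1)) - f (p i)) - ∫ s in p i..p (i+1), h s| :=
            Finset.abs_sum_le_sum_abs _ _
        _ ≤ ∑ i ∈ Finset.range n,
              (ε * ((∫ s in p i..p (i+1), ‖g s‖) + (p (i+1) - p i))) := by
            refine Finset.sum_le_sum fun i hi => ?_
            have hi' := Finset.mem_range.mp hi
            refine hstep (p i) (p (i+1)) (hpmem i hi'.le) (hpmem (i+1) hi') (hple i) ?_
            rw [hpstep i]
            exact htn
        _ = ε * c := by
            rw [← Finset.mul_sum, Finset.sum_add_distrib, htele_g, htele_p, hcdef]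
    have hX : |f t - f 0 - ∫ s in (0:ℝ)..t, h s| ≤ 0 := by
      have h01 : ∀ ε : ℝ, 0 < ε → |f t - f 0 - ∫ s in (0:ℝ)..t, h s| ≤ 0 + ε := by
        intro ε hε
        have h1 := habs (ε / (c+1)) (by positivity)
        have h2 : ε / (c+1) * c ≤ ε := by
          rw [div_mul_eq_mul_div, div_le_iff₀ (by linarith)]
          nlinarith
        linarith
      exact le_of_forall_pos_le_add h01
    have hX0 : f t - f 0 - ∫ s in (0:ℝ)..t, h s = 0 :=
      abs_eq_zero.mp (le_antisymm hX (abs_nonneg _))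
    linarith

end SekiMaster
section SekiCov

open Set intervalIntegral MeasureTheory

attribute [local instance] Matrix.linftyOpNormedAddCommGroup Matrix.linftyOpNormedSpace
  Matrix.linftyOpNormedRing Matrix.linftyOpNormedAlgebra

set_option maxHeartbeats 1000000 in
/-- The covariance of a SEKI solution satisfies `(C₀⁻¹ + 2tB) C(t) = 1`. -/
lemma seki_cov_key {d K J : ℕ} (A : Matrix (Fin K) (Fin d) ℝ) (Γ : Matrix (Fin K) (Fin K) ℝ)
    (C0 : Matrix (Fin d) (Fin d) ℝ) (y : EuclideanSpace ℝ (Fin K))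
    (R : EuclideanSpace ℝ (Fin d) → ℝ) (x : Fin J → ℝ → EuclideanSpace ℝ (Fin d))
    (hx : IsSEKISolInf A Γ C0 y R x)
    (hBm : (Aᵀ * Γ⁻¹ * A + C0⁻¹)ᵀ = Aᵀ * Γ⁻¹ * A + C0⁻¹)
    (Q0 : Matrix (Fin d) (Fin d) ℝ) (hQ0 : Q0 * ecov (fun j => x j 0) = 1) :
    ∀ t : ℝ, 0 ≤ t →
      (Q0 + (2*t) • (Aᵀ * Γ⁻¹ * A + C0⁻¹)) * ecov (fun j => x j t) = 1 := by
  obtain ⟨hxc, w, hwI, hwmem, hmeanEq, hdev⟩ := hx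
  set Bm : Matrix (Fin d) (Fin d) ℝ := Aᵀ * Γ⁻¹ * A + C0⁻¹ with hBmdef
  set e : Fin J → ℝ → EuclideanSpace ℝ (Fin d) :=
    fun j t => x j t - emean (fun j' => x j' t) with hedef
  set Cm : ℝ → Matrix (Fin d) (Fin d) ℝ := fun t => ecov (fun j => x j t) with hCmdef
  -- continuity
  have hmean_cont : ContinuousOn (fun t => emean (fun j => x j t)) (Ici (0:ℝ)) := by
    show ContinuousOn (fun t => (J:ℝ)⁻¹ • ∑ j, x j t) (Ici (0:ℝ))
    exact (continuousOn_finset_sum _ fun j _ => hxc j).const_smul ((J:ℝ)⁻¹)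
  have he_cont : ∀ j, ContinuousOn (e j) (Ici (0:ℝ)) := fun j => (hxc j).sub hmean_cont
  have hCm_eq : ∀ t, Cm t = (J:ℝ)⁻¹ • ∑ j, seki_outerCLM2 (e j t) (e j t) := fun t => rfl
  have hCm_cont : ContinuousOn Cm (Ici (0:ℝ)) := by
    have h0 : ∀ j ∈ Finset.univ, ContinuousOn
        (fun t => seki_outerCLM2 (e j t) (e j t)) (Ici (0:ℝ)) := by
      intro j _
      have h1 : ContinuousOn (fun t => seki_outerCLM2 (e j t)) (Ici (0:ℝ)) :=
        seki_outerCLM2.continuous.comp_continuousOn (he_cont j)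
      exact h1.clm_apply (he_cont j)
    have h2 := (continuousOn_finset_sum Finset.univ h0).const_smul ((J:ℝ)⁻¹)
    have h3 : Cm = fun t => (J:ℝ)⁻¹ • ∑ j, seki_outerCLM2 (e j t) (e j t) := funext hCm_eq
    rw [h3]
    exact h2
  -- the deviation vector field
  set fe : Fin J → ℝ → EuclideanSpace ℝ (Fin d) :=
    fun j s => -(mulVecE (Cm s * Bm) (e j s)) with hfedef
  have hfe_cont : ∀ j, ContinuousOn (fe j) (Ici (0:ℝ)) := by
    intro j
    have h1 : ContinuousOn (fun s => seki_mulVecCLM2 (Cm s * Bm)) (Ici (0:ℝ)) :=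
      seki_mulVecCLM2.continuous.comp_continuousOn (hCm_cont.mul continuousOn_const)
    exact (h1.clm_apply (he_cont j)).neg
  have heq : ∀ j, ∀ t : ℝ, 0 ≤ t → e j t = e j 0 + ∫ s in (0:ℝ)..t, fe j s := by
    intro j t ht
    exact hdev j t ht
  -- derivatives of the deviations
  have hde : ∀ j, ∀ t : ℝ, 0 ≤ t → HasDerivWithinAt (e j) (fe j t) (Ici t) t := by
    intro j t ht
    have hIoi : Ioi t ⊆ Ici (0:ℝ) := fun s hs => ht.trans (le_of_lt hs)
    have hInt : IntervalIntegrable (fe j) volume 0 t := by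
      apply ContinuousOn.intervalIntegrable
      rw [uIcc_of_le ht]
      exact (hfe_cont j).mono (Icc_subset_Ici_self)
    have hmeas : StronglyMeasurableAtFilter (fe j) (nhdsWithin t (Ioi t)) volume :=
      ⟨Ici 0, mem_of_superset self_mem_nhdsWithin hIoi,
        ((hfe_cont j).aestronglyMeasurable measurableSet_Ici)⟩
    have hcw : ContinuousWithinAt (fe j) (Ioi t) t := ((hfe_cont j) t ht).mono hIoi
    have hFTC : HasDerivWithinAt (fun u => ∫ s in (0:ℝ)..u, fe j s) (fe j t) (Ici t) t :=
      intervalIntegral.integral_hasDerivWithinAt_right hInt hmeas hcw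
    have hFTC2 : HasDerivWithinAt (fun u => e j 0 + ∫ s in (0:ℝ)..u, fe j s) (fe j t) (Ici t) t :=
      hFTC.const_add _
    exact hFTC2.congr (fun s hs => heq j s (ht.trans hs)) (heq j t ht)
  -- derivative of the covariance
  have hdC : ∀ t : ℝ, 0 ≤ t →
      HasDerivWithinAt Cm (-(Cm t * Bm * Cm t + Cm t * (Bm * Cm t))) (Ici t) t := by
    intro t ht
    have hsum : HasDerivWithinAt (fun u => (J:ℝ)⁻¹ • ∑ j, seki_outerCLM2 (e j u) (e j u))
        ((J:ℝ)⁻¹ • ∑ j, (seki_outerCLM2 (e j t) (fe j t) + seki_outerCLM2 (fe j t) (e j t)))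
        (Ici t) t := by
      refine HasDerivWithinAt.fun_const_smul _ ?_
      refine HasDerivWithinAt.fun_sum fun j _ => ?_
      exact seki_outerCLM2.hasDerivWithinAt_of_bilinear (hde j t ht) (hde j t ht)
    have h3 : Cm = fun u => (J:ℝ)⁻¹ • ∑ j, seki_outerCLM2 (e j u) (e j u) := funext hCm_eq
    have hCsum : ((J:ℝ)⁻¹ • ∑ j, Matrix.vecMulVec (fun i => e j t i) (fun i => e j t i))
        = Cm t := (hCm_eq t).symm
    have hMT : (Cm t * Bm)ᵀ = Bm * Cm t := by
      rw [Matrix.transpose_mul, hBm]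
      congr 1
      exact seki_ecov_transpose _
    have hterm : ∀ j : Fin J, seki_outerCLM2 (e j t) (fe j t) + seki_outerCLM2 (fe j t) (e j t)
        = -(Matrix.vecMulVec (fun i => e j t i) (fun i => e j t i) * (Bm * Cm t)
            + (Cm t * Bm) * Matrix.vecMulVec (fun i => e j t i) (fun i => e j t i)) := by
      intro j
      have h1 : seki_outerCLM2 (e j t) (fe j t)
          = -(seki_outerCLM2 (e j t) (mulVecE (Cm t * Bm) (e j t))) := by
        show seki_outerCLM2 (e j t) (-(mulVecE (Cm t * Bm) (e j t))) = _
        exact map_neg _ _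
      have h2 : seki_outerCLM2 (fe j t) (e j t)
          = -(seki_outerCLM2 (mulVecE (Cm t * Bm) (e j t)) (e j t)) := by
        show seki_outerCLM2 (-(mulVecE (Cm t * Bm) (e j t))) (e j t) = _
        rw [map_neg]
        rfl
      rw [h1, h2, seki_outerCLM2_apply, seki_outerCLM2_apply,
        seki_vecMulVec_mulVecE_right, seki_vecMulVec_mulVecE_left, hMT]
      abel
    have hDval : ((J:ℝ)⁻¹ • ∑ j, (seki_outerCLM2 (e j t) (fe j t) + seki_outerCLM2 (fe j t) (e j t)))
        = -(Cm t * Bm * Cm t + Cm t * (Bm * Cm t)) := by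
      simp only [hterm]
      rw [Finset.sum_neg_distrib, Finset.sum_add_distrib, smul_neg, smul_add,
        ← Finset.sum_mul, ← Finset.mul_sum, ← smul_mul_assoc, ← mul_smul_comm, hCsum]
      rw [add_comm]
    rw [← hDval]
    rw [h3]
    exact hsum
  -- Gronwall argument
  intro T hT
  set P : ℝ → Matrix (Fin d) (Fin d) ℝ := fun s => Q0 + (2*s) • Bm with hPdef
  set Δ : ℝ → Matrix (Fin d) (Fin d) ℝ := fun s => 1 - P s * Cm s with hΔdef
  have hP_cont : Continuous P :=
    continuous_const.add ((continuous_const.mul continuous_id).smul continuous_const)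
  have hΔcont : ContinuousOn Δ (Icc 0 T) :=
    continuousOn_const.sub
      ((hP_cont.continuousOn).mul (hCm_cont.mono Icc_subset_Ici_self))
  have hΔ0 : Δ 0 = 0 := by
    have hP0 : P 0 = Q0 := by
      rw [hPdef]
      simp
    show 1 - P 0 * Cm 0 = 0
    rw [hP0]
    rw [show Cm 0 = ecov (fun j => x j 0) from rfl, hQ0]
    simp
  have hΔderiv : ∀ s ∈ Ico (0:ℝ) T,
      HasDerivWithinAt Δ ((-2:ℝ) • (Δ s * (Bm * Cm s))) (Ici s) s := by
    intro s hs
    have hs0 : (0:ℝ) ≤ s := hs.1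
    have hPd : HasDerivWithinAt P ((2:ℝ) • Bm) (Ici s) s := by
      have h1 : HasDerivAt (fun r : ℝ => 2*r) 2 s := by
        simpa using (hasDerivAt_id s).const_mul (2:ℝ)
      exact ((h1.smul_const Bm).const_add Q0).hasDerivWithinAt
    have hCd := hdC s hs0
    have hprod := hPd.mul hCd
    have hsub := hprod.const_sub (1 : Matrix (Fin d) (Fin d) ℝ)
    convert hsub using 1
    show (-2:ℝ) • ((1 - P s * Cm s) * (Bm * Cm s)) = _
    have hns : ∀ M : Matrix (Fin d) (Fin d) ℝ, (-2:ℝ) • M = -(M + M) := by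
      intro M
      rw [neg_smul, two_smul]
    have hps : ((2:ℝ) • Bm) = Bm + Bm := two_smul ℝ Bm
    rw [hns, hps]
    noncomm_ring
    all_goals rfl
  obtain ⟨Cb, hCb⟩ := (isCompact_Icc (a := (0:ℝ)) (b := T)).exists_bound_of_continuousOn
    (continuousOn_const.mul (hCm_cont.mono Icc_subset_Ici_self)
      : ContinuousOn (fun s => Bm * Cm s) (Icc 0 T))
  have hbound : ∀ s ∈ Ico (0:ℝ) T,
      ‖(-2:ℝ) • (Δ s * (Bm * Cm s))‖ ≤ (2*Cb) * ‖Δ s‖ + 0 := by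
    intro s hs
    rw [norm_smul]
    have h1 : ‖(-2:ℝ)‖ = 2 := by
      rw [Real.norm_eq_abs]
      norm_num
    rw [h1, add_zero]
    have h2 := norm_mul_le (Δ s) (Bm * Cm s)
    have h3 : ‖Bm * Cm s‖ ≤ Cb := hCb s (Ico_subset_Icc_self hs)
    have h4 : (0:ℝ) ≤ ‖Δ s‖ := norm_nonneg _
    nlinarith [norm_nonneg (Bm * Cm s), norm_nonneg (Δ s * (Bm * Cm s))]
  have hA0 : ‖Δ 0‖ ≤ (0:ℝ) := by
    rw [hΔ0]
    simp
  have hgron := norm_le_gronwallBound_of_norm_deriv_right_le hΔcont hΔderiv hA0 hbound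
  have hTT := hgron T (right_mem_Icc.mpr hT)
  rw [gronwallBound_ε0_δ0] at hTT
  have hzero : Δ T = 0 := norm_le_zero_iff.mp hTT
  have h5 : 1 - P T * Cm T = 0 := hzero
  have h6 : (1 : Matrix (Fin d) (Fin d) ℝ) = P T * Cm T := sub_eq_zero.mp h5
  exact h6.symm

end SekiCov
section SekiMainPre

open Set intervalIntegral MeasureTheory

attribute [local instance] Matrix.linftyOpNormedAddCommGroup Matrix.linftyOpNormedSpace
  Matrix.linftyOpNormedRing Matrix.linftyOpNormedAlgebra

lemma seki_emean_cont {d J : ℕ} (x : Fin J → ℝ → EuclideanSpace ℝ (Fin d))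
    (hxc : ∀ j, ContinuousOn (x j) (Ici (0:ℝ))) :
    ContinuousOn (fun t => emean (fun j => x j t)) (Ici (0:ℝ)) := by
  show ContinuousOn (fun t => (J:ℝ)⁻¹ • ∑ j, x j t) (Ici (0:ℝ))
  exact (continuousOn_finset_sum _ fun j _ => hxc j).const_smul ((J:ℝ)⁻¹)

lemma seki_ecov_cont {d J : ℕ} (x : Fin J → ℝ → EuclideanSpace ℝ (Fin d))
    (hxc : ∀ j, ContinuousOn (x j) (Ici (0:ℝ))) :
    ContinuousOn (fun t => ecov (fun j => x j t)) (Ici (0:ℝ)) := by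
  have he_cont : ∀ j, ContinuousOn
      (fun t => x j t - emean (fun j' => x j' t)) (Ici (0:ℝ)) :=
    fun j => (hxc j).sub (seki_emean_cont x hxc)
  have h0 : ∀ j ∈ Finset.univ, ContinuousOn
      (fun t => seki_outerCLM2 (x j t - emean (fun j' => x j' t))
        (x j t - emean (fun j' => x j' t))) (Ici (0:ℝ)) := by
    intro j _
    have h1 : ContinuousOn (fun t => seki_outerCLM2 (x j t - emean (fun j' => x j' t)))
        (Ici (0:ℝ)) := seki_outerCLM2.continuous.comp_continuousOn (he_cont j)
    exact h1.clm_apply (he_cont j)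
  have h2 := (continuousOn_finset_sum Finset.univ h0).const_smul ((J:ℝ)⁻¹)
  exact h2

end SekiMainPre
section SekiMain

open Set intervalIntegral MeasureTheory

attribute [local instance] Matrix.linftyOpNormedAddCommGroup Matrix.linftyOpNormedSpace
  Matrix.linftyOpNormedRing Matrix.linftyOpNormedAlgebra

set_option maxHeartbeats 2000000 in
lemma seki_main {d K J : ℕ} (A : Matrix (Fin K) (Fin d) ℝ) (Γ : Matrix (Fin K) (Fin K) ℝ)
    (hΓ : Γ.PosDef) (C0 : Matrix (Fin d) (Fin d) ℝ) (hC0 : C0.PosDef)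
    (y : EuclideanSpace ℝ (Fin K))
    (R : EuclideanSpace ℝ (Fin d) → ℝ)
    (x z : Fin J → ℝ → EuclideanSpace ℝ (Fin d))
    (hx : IsSEKISolInf A Γ C0 y R x) (hz : IsSEKISolInf A Γ C0 y R z)
    (hcov0 : ecov (fun j => x j 0) = ecov (fun j => z j 0))
    (hpos0 : (ecov (fun j => x j 0)).PosDef) :
    ∀ t : ℝ, 0 ≤ t →
      ecov (fun j => x j t) = ecov (fun j => z j t) ∧
      Real.sqrt (wnormSq (ecov (fun j => x j t))
          (emean (fun j => x j t) - emean (fun j => z j t))) ≤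
        Real.sqrt (wnormSq (ecov (fun j => x j 0))
          (emean (fun j => x j 0) - emean (fun j => z j 0))) := by
  have hG : (Γ⁻¹)ᵀ = Γ⁻¹ := seki_transpose_of_hermitian hΓ.isHermitian.inv
  have hC : (C0⁻¹)ᵀ = C0⁻¹ := seki_transpose_of_hermitian hC0.isHermitian.inv
  have hBmT : (Aᵀ * Γ⁻¹ * A + C0⁻¹)ᵀ = Aᵀ * Γ⁻¹ * A + C0⁻¹ := by
    rw [Matrix.transpose_add, Matrix.transpose_mul, Matrix.transpose_mul,
      Matrix.transpose_transpose, hG, hC, Matrix.mul_assoc]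
  have hdet : IsUnit (ecov (fun j => x j 0)).det :=
    (Matrix.isUnit_iff_isUnit_det _).mp hpos0.isUnit
  have hQ0x : (ecov (fun j => x j 0))⁻¹ * ecov (fun j => x j 0) = 1 :=
    Matrix.nonsing_inv_mul _ hdet
  have hQ0z : (ecov (fun j => x j 0))⁻¹ * ecov (fun j => z j 0) = 1 := by
    rw [← hcov0]
    exact hQ0x
  have covx := seki_cov_key A Γ C0 y R x hx hBmT _ hQ0x
  have covz := seki_cov_key A Γ C0 y R z hz hBmT _ hQ0z
  have covEq : ∀ s : ℝ, 0 ≤ s → ecov (fun j => x j s) = ecov (fun j => z j s) := by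
    intro s hs
    have h1 := covx s hs
    have h2 := covz s hs
    have h3 : ecov (fun j => x j s) *
        ((ecov fun j => x j 0)⁻¹ + (2*s) • (Aᵀ * Γ⁻¹ * A + C0⁻¹)) = 1 :=
      mul_eq_one_comm.mp h1
    calc ecov (fun j => x j s)
        = ecov (fun j => x j s) *
            (((ecov fun j => x j 0)⁻¹ + (2*s) • (Aᵀ * Γ⁻¹ * A + C0⁻¹)) *
              ecov (fun j => z j s)) := by
          rw [h2, Matrix.mul_one]
      _ = ecov (fun j => z j s) := by
          rw [← Matrix.mul_assoc, h3, Matrix.one_mul]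
  obtain ⟨hxc, wx, hwxI, hwxmem, hmeanx, hdevx⟩ := hx
  obtain ⟨hzc, wz, hwzI, hwzmem, hmeanz, hdevz⟩ := hz
  set Bm : Matrix (Fin d) (Fin d) ℝ := Aᵀ * Γ⁻¹ * A + C0⁻¹ with hBmdef
  set Q0i : Matrix (Fin d) (Fin d) ℝ := (ecov (fun j => x j 0))⁻¹ with hQ0idef
  set u : ℝ → EuclideanSpace ℝ (Fin d) :=
    fun t => emean (fun j => x j t) - emean (fun j => z j t) with hudef
  set g : ℝ → EuclideanSpace ℝ (Fin d) :=
    fun s => -(mulVecE (ecov (fun j => x j s)) (mulVecE Bm (u s) + (wx s - wz s))) with hgdef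
  have hmcx := seki_emean_cont x hxc
  have hmcz := seki_emean_cont z hzc
  have hu_cont : ContinuousOn u (Ici (0:ℝ)) := hmcx.sub hmcz
  have hCx_cont := seki_ecov_cont x hxc
  have hIcont : ∀ (F : ℝ → EuclideanSpace ℝ (Fin d)), ContinuousOn F (Ici (0:ℝ)) →
      ∀ t : ℝ, 0 ≤ t → IntervalIntegrable F volume 0 t := by
    intro F hF t ht
    apply ContinuousOn.intervalIntegrable
    rw [uIcc_of_le ht]
    exact hF.mono Icc_subset_Ici_self
  have hIC : ∀ (C : ℝ → Matrix (Fin d) (Fin d) ℝ) (w' : ℝ → EuclideanSpace ℝ (Fin d)),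
      ContinuousOn C (Ici (0:ℝ)) → (∀ t : ℝ, 0 ≤ t → IntervalIntegrable w' volume 0 t) →
      ∀ t : ℝ, 0 ≤ t →
        IntervalIntegrable (fun s => mulVecE (C s) (w' s)) volume 0 t := by
    intro C w' hCc hw' t ht
    have h1 : ContinuousOn C (uIcc 0 t) := by
      rw [uIcc_of_le ht]
      exact hCc.mono Icc_subset_Ici_self
    exact seki_II_bilin seki_mulVecCLM2 h1 (hw' t ht)
  have hVx_cont : ContinuousOn (fun s =>
      mulVecE (Aᵀ * Γ⁻¹) (mulVecE A (emean fun j => x j s) - y)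
        + mulVecE C0⁻¹ (emean fun j => x j s)) (Ici (0:ℝ)) := by
    have h1 : ContinuousOn (fun s => mulVecE A (emean fun j => x j s) - y) (Ici (0:ℝ)) :=
      ((seki_mulVecCLM A).continuous.comp_continuousOn hmcx).sub continuousOn_const
    have h2 := (seki_mulVecCLM (Aᵀ * Γ⁻¹)).continuous.comp_continuousOn h1
    have h3 := (seki_mulVecCLM C0⁻¹).continuous.comp_continuousOn hmcx
    exact h2.add h3
  have hVz_cont : ContinuousOn (fun s =>
      mulVecE (Aᵀ * Γ⁻¹) (mulVecE A (emean fun j => z j s) - y)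
        + mulVecE C0⁻¹ (emean fun j => z j s)) (Ici (0:ℝ)) := by
    have h1 : ContinuousOn (fun s => mulVecE A (emean fun j => z j s) - y) (Ici (0:ℝ)) :=
      ((seki_mulVecCLM A).continuous.comp_continuousOn hmcz).sub continuousOn_const
    have h2 := (seki_mulVecCLM (Aᵀ * Γ⁻¹)).continuous.comp_continuousOn h1
    have h3 := (seki_mulVecCLM C0⁻¹).continuous.comp_continuousOn hmcz
    exact h2.add h3
  have hIfx : ∀ t : ℝ, 0 ≤ t → IntervalIntegrable (fun s =>
      -(mulVecE (ecov (fun j => x j s))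
        (mulVecE (Aᵀ * Γ⁻¹) (mulVecE A (emean fun j => x j s) - y) +
          mulVecE C0⁻¹ (emean fun j => x j s) + wx s))) volume 0 t := by
    intro t ht
    have hsplit : (fun s =>
        -(mulVecE (ecov (fun j => x j s))
          (mulVecE (Aᵀ * Γ⁻¹) (mulVecE A (emean fun j => x j s) - y) +
            mulVecE C0⁻¹ (emean fun j => x j s) + wx s)))
        = (fun s => -(mulVecE (ecov (fun j => x j s))
            (mulVecE (Aᵀ * Γ⁻¹) (mulVecE A (emean fun j => x j s) - y) +
              mulVecE C0⁻¹ (emean fun j => x j s))))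
          + fun s => -(mulVecE (ecov (fun j => x j s)) (wx s)) := by
      funext s
      show -(mulVecE _ (_ + wx s)) = _
      rw [seki_mulVecE_add]
      show _ = -(mulVecE _ _) + -(mulVecE _ (wx s))
      abel
    rw [hsplit]
    have h1 : ContinuousOn (fun s => -(mulVecE (ecov (fun j => x j s))
        (mulVecE (Aᵀ * Γ⁻¹) (mulVecE A (emean fun j => x j s) - y) +
          mulVecE C0⁻¹ (emean fun j => x j s)))) (Ici (0:ℝ)) :=
      ((seki_mulVecCLM2.continuous.comp_continuousOn hCx_cont).clm_apply hVx_cont).neg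
    have h2 : IntervalIntegrable (fun s => mulVecE (ecov (fun j => x j s)) (wx s))
        volume 0 t := hIC _ wx hCx_cont (fun T hT => hwxI T hT) t ht
    exact (hIcont _ h1 t ht).add h2.neg
  have hIfz : ∀ t : ℝ, 0 ≤ t → IntervalIntegrable (fun s =>
      -(mulVecE (ecov (fun j => z j s))
        (mulVecE (Aᵀ * Γ⁻¹) (mulVecE A (emean fun j => z j s) - y) +
          mulVecE C0⁻¹ (emean fun j => z j s) + wz s))) volume 0 t := by
    intro t ht
    have hCz_cont := seki_ecov_cont z hzc
    have hsplit : (fun s =>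
        -(mulVecE (ecov (fun j => z j s))
          (mulVecE (Aᵀ * Γ⁻¹) (mulVecE A (emean fun j => z j s) - y) +
            mulVecE C0⁻¹ (emean fun j => z j s) + wz s)))
        = (fun s => -(mulVecE (ecov (fun j => z j s))
            (mulVecE (Aᵀ * Γ⁻¹) (mulVecE A (emean fun j => z j s) - y) +
              mulVecE C0⁻¹ (emean fun j => z j s))))
          + fun s => -(mulVecE (ecov (fun j => z j s)) (wz s)) := by
      funext s
      show -(mulVecE _ (_ + wz s)) = _
      rw [seki_mulVecE_add]
      show _ = -(mulVecE _ _) + -(mulVecE _ (wz s))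
      abel
    rw [hsplit]
    have h1 : ContinuousOn (fun s => -(mulVecE (ecov (fun j => z j s))
        (mulVecE (Aᵀ * Γ⁻¹) (mulVecE A (emean fun j => z j s) - y) +
          mulVecE C0⁻¹ (emean fun j => z j s)))) (Ici (0:ℝ)) :=
      ((seki_mulVecCLM2.continuous.comp_continuousOn hCz_cont).clm_apply hVz_cont).neg
    have h2 : IntervalIntegrable (fun s => mulVecE (ecov (fun j => z j s)) (wz s))
        volume 0 t := hIC _ wz hCz_cont (fun T hT => hwzI T hT) t ht
    exact (hIcont _ h1 t ht).add h2.neg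
  have hIg : ∀ t : ℝ, 0 ≤ t → IntervalIntegrable g volume 0 t := by
    intro t ht
    have hsplit : g = (fun s => -(mulVecE (ecov (fun j => x j s)) (mulVecE Bm (u s))))
        + fun s => -(mulVecE (ecov (fun j => x j s)) (wx s - wz s)) := by
      funext s
      show -(mulVecE _ (mulVecE Bm (u s) + (wx s - wz s))) = _
      rw [seki_mulVecE_add]
      show _ = -(mulVecE _ _) + -(mulVecE _ _)
      abel
    rw [hsplit]
    have h1 : ContinuousOn (fun s => -(mulVecE (ecov (fun j => x j s)) (mulVecE Bm (u s))))
        (Ici (0:ℝ)) := by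
      have h2 : ContinuousOn (fun s => mulVecE Bm (u s)) (Ici (0:ℝ)) :=
        (seki_mulVecCLM Bm).continuous.comp_continuousOn hu_cont
      exact ((seki_mulVecCLM2.continuous.comp_continuousOn hCx_cont).clm_apply h2).neg
    exact (hIcont _ h1 t ht).add
      ((hIC _ _ hCx_cont (fun T hT => (hwxI T hT).sub (hwzI T hT)) t ht).neg)
  have hueq : ∀ t : ℝ, 0 ≤ t → u t = u 0 + ∫ s in (0:ℝ)..t, g s := by
    intro t ht
    have hx1 := hmeanx t ht
    have hz1 := hmeanz t ht
    have hstep : u t = u 0 + ((∫ s in (0:ℝ)..t,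
        -(mulVecE (ecov (fun j => x j s))
          (mulVecE (Aᵀ * Γ⁻¹) (mulVecE A (emean fun j => x j s) - y) +
            mulVecE C0⁻¹ (emean fun j => x j s) + wx s)))
      - (∫ s in (0:ℝ)..t,
        -(mulVecE (ecov (fun j => z j s))
          (mulVecE (Aᵀ * Γ⁻¹) (mulVecE A (emean fun j => z j s) - y) +
            mulVecE C0⁻¹ (emean fun j => z j s) + wz s)))) := by
      show emean (fun j => x j t) - emean (fun j => z j t) = _
      rw [hx1, hz1]
      show _ = (emean (fun j => x j 0) - emean (fun j => z j 0)) + _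
      abel
    rw [hstep, ← intervalIntegral.integral_sub (hIfx t ht) (hIfz t ht)]
    congr 1
    apply intervalIntegral.integral_congr
    intro s hs
    rw [uIcc_of_le ht] at hs
    have hs0 : (0:ℝ) ≤ s := hs.1
    have hcse : ecov (fun j => z j s) = ecov (fun j => x j s) := (covEq s hs0).symm
    have hab : (mulVecE (Aᵀ * Γ⁻¹) (mulVecE A (emean fun j => x j s) - y) +
          mulVecE C0⁻¹ (emean fun j => x j s) + wx s)
        - (mulVecE (Aᵀ * Γ⁻¹) (mulVecE A (emean fun j => z j s) - y) +
          mulVecE C0⁻¹ (emean fun j => z j s) + wz s)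
        = mulVecE Bm (u s) + (wx s - wz s) := by
      show _ = mulVecE Bm (emean (fun j => x j s) - emean (fun j => z j s)) + _
      rw [hBmdef, seki_mulVecE_matrix_add,
        ← seki_mulVecE_mulVecE (Aᵀ * Γ⁻¹) A
          (emean (fun j => x j s) - emean (fun j => z j s))]
      simp only [seki_mulVecE_sub]
      abel
    show (fun s => -(mulVecE (ecov (fun j => x j s))
          (mulVecE (Aᵀ * Γ⁻¹) (mulVecE A (emean fun j => x j s) - y) +
            mulVecE C0⁻¹ (emean fun j => x j s) + wx s))) s
        - (fun s => -(mulVecE (ecov (fun j => z j s))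
          (mulVecE (Aᵀ * Γ⁻¹) (mulVecE A (emean fun j => z j s) - y) +
            mulVecE C0⁻¹ (emean fun j => z j s) + wz s))) s = g s
    show -(mulVecE (ecov (fun j => x j s))
          (mulVecE (Aᵀ * Γ⁻¹) (mulVecE A (emean fun j => x j s) - y) +
            mulVecE C0⁻¹ (emean fun j => x j s) + wx s))
        - -(mulVecE (ecov (fun j => z j s))
          (mulVecE (Aᵀ * Γ⁻¹) (mulVecE A (emean fun j => z j s) - y) +
            mulVecE C0⁻¹ (emean fun j => z j s) + wz s)) = g s
    rw [hcse]
    rw [show ∀ (p q : EuclideanSpace ℝ (Fin d)), -p - -q = -(p - q) from fun p q => by abel]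
    rw [← seki_mulVecE_sub, hab]
  have hsm : ∀ r : ℝ, r • ((2:ℝ) • Bm) = (2*r) • Bm := by
    intro r
    rw [smul_smul, mul_comm]
  have hQ0isym : Q0iᵀ = Q0i := by
    rw [hQ0idef, Matrix.transpose_nonsing_inv]
    congr 1
    exact seki_ecov_transpose _
  have hQ1sym : ((2:ℝ) • Bm)ᵀ = (2:ℝ) • Bm := by
    rw [Matrix.transpose_smul, hBmT]
  intro t ht
  refine ⟨covEq t ht, ?_⟩
  apply Real.sqrt_le_sqrt
  have hmast := seki_master ht g u Q0i ((2:ℝ) • Bm) hQ0isym hQ1sym (hIg t ht)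
    (hu_cont.mono Icc_subset_Ici_self) (fun s hs => hueq s hs.1) t (right_mem_Icc.mpr ht)
  have hint : (∫ s in (0:ℝ)..t,
      (2 * ⟪g s, mulVecE (Q0i + s • ((2:ℝ) • Bm)) (u s)⟫
        + ⟪u s, mulVecE ((2:ℝ) • Bm) (u s)⟫)) ≤ 0 := by
    rw [intervalIntegral.integral_of_le ht]
    apply MeasureTheory.integral_nonpos_of_ae
    have hresx : ∀ᵐ s ∂volume.restrict (Ioc (0:ℝ) t),
        wx s ∈ subderiv R (emean fun j => x j s) :=
      ae_restrict_of_ae_restrict_of_subset (Set.Ioc_subset_Icc_self.trans (Set.Icc_subset_Ici_self)) hwxmem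
    have hresz : ∀ᵐ s ∂volume.restrict (Ioc (0:ℝ) t),
        wz s ∈ subderiv R (emean fun j => z j s) :=
      ae_restrict_of_ae_restrict_of_subset (Set.Ioc_subset_Icc_self.trans (Set.Icc_subset_Ici_self)) hwzmem
    filter_upwards [hresx, hresz, ae_restrict_mem measurableSet_Ioc] with s hmx hmz hs
    have hs0 : (0:ℝ) ≤ s := hs.1.le
    have hPC := covx s hs0
    have hCP : ecov (fun j => x j s) * (Q0i + (2*s) • Bm) = 1 :=
      mul_eq_one_comm.mp hPC
    have hCsT : (ecov (fun j => x j s))ᵀ = ecov (fun j => x j s) := seki_ecov_transpose _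
    have hginner : ⟪g s, mulVecE (Q0i + (2*s) • Bm) (u s)⟫
        = -⟪mulVecE Bm (u s) + (wx s - wz s), u s⟫ := by
      show ⟪-(mulVecE (ecov fun j => x j s) (mulVecE Bm (u s) + (wx s - wz s))),
        mulVecE (Q0i + (2*s) • Bm) (u s)⟫ = _
      rw [inner_neg_left, seki_inner_mulVecE_left, hCsT, seki_mulVecE_mulVecE, hCP,
        seki_mulVecE_one]
    have hmono : 0 ≤ ⟪wx s - wz s, u s⟫ := by
      have h1 := hmx (emean fun j => z j s)
      have h2 := hmz (emean fun j => x j s)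
      have e1 : emean (fun j => z j s) - emean (fun j => x j s) = -(u s) := by
        show _ = -(emean (fun j => x j s) - emean (fun j => z j s))
        rw [neg_sub]
      have e2 : emean (fun j => x j s) - emean (fun j => z j s) = u s := rfl
      rw [e1, inner_neg_right] at h1
      rw [e2] at h2
      rw [inner_sub_left]
      linarith
    have hfinal : 2 * ⟪g s, mulVecE (Q0i + s • ((2:ℝ) • Bm)) (u s)⟫
        + ⟪u s, mulVecE ((2:ℝ) • Bm) (u s)⟫ = -(2 * ⟪wx s - wz s, u s⟫) := by
      rw [hsm s, hginner, seki_mulVecE_matrix_smul, real_inner_smul_right, inner_add_left,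
        real_inner_comm (mulVecE Bm (u s)) (u s)]
      ring
    show 2 * ⟪g s, mulVecE (Q0i + s • ((2:ℝ) • Bm)) (u s)⟫
        + ⟪u s, mulVecE ((2:ℝ) • Bm) (u s)⟫ ≤ (0 : ℝ → ℝ) s
    rw [hfinal]
    simp only [Pi.zero_apply]
    linarith
  have hinv_t : (ecov (fun j => x j t))⁻¹ = Q0i + t • ((2:ℝ) • Bm) := by
    rw [hsm t]
    exact Matrix.inv_eq_left_inv (covx t ht)
  show ⟪u t, mulVecE (ecov (fun j => x j t))⁻¹ (u t)⟫
      ≤ ⟪u 0, mulVecE Q0i (u 0)⟫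
  rw [hinv_t, hmast]
  linarith

end SekiMain
/-- two solutions of the linear SEKI flow whose initial ensembles have equal
positive definite empirical covariances have identical covariances for all `t ≥ 0`, and
their ensemble means satisfy the contraction estimate
`‖x̄(t) - z̄(t)‖_{C(t)} ≤ ‖x̄₀ - z̄₀‖_{C(0)}`. -/
theorem stmt2 {d K J : ℕ} (A : Matrix (Fin K) (Fin d) ℝ) (Γ : Matrix (Fin K) (Fin K) ℝ)
    (hΓ : Γ.PosDef) (C0 : Matrix (Fin d) (Fin d) ℝ) (hC0 : C0.PosDef)
    (y : EuclideanSpace ℝ (Fin K))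
    (R : EuclideanSpace ℝ (Fin d) → ℝ) (hRconv : ConvexOn ℝ Set.univ R)
    (hRlsc : LowerSemicontinuous R) (hRbdd : BddBelow (Set.range R))
    (x z : Fin J → ℝ → EuclideanSpace ℝ (Fin d))
    (hx : IsSEKISolInf A Γ C0 y R x) (hz : IsSEKISolInf A Γ C0 y R z)
    (hcov0 : ecov (fun j => x j 0) = ecov (fun j => z j 0))
    (hpos0 : (ecov (fun j => x j 0)).PosDef) :
    ∀ t : ℝ, 0 ≤ t →
      ecov (fun j => x j t) = ecov (fun j => z j t) ∧
      Real.sqrt (wnormSq (ecov (fun j => x j t))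
          (emean (fun j => x j t) - emean (fun j => z j t))) ≤
        Real.sqrt (wnormSq (ecov (fun j => x j 0))
          (emean (fun j => x j 0) - emean (fun j => z j 0))) := by
  exact seki_main A Γ hΓ C0 hC0 y R x z hx hz hcov0 hpos0
end

section
/- Let S ∈ ℝ^{d×d} be symmetric with μI ⪯ S ⪯ LI for 0 < μ ≤ L, let e^{(1)},…,e^{(J)} ∈ ℝ^d with C = (1/J)∑_j e^{(j)}(e^{(j)})ᵀ and E = (1/J)∑_j ‖e^{(j)}‖², and let h > 0. Define e'^{(j)} = e^{(j)} − hCSe^{(j)} and E' = (1/J)∑_j ‖e'^{(j)}‖². Then E' ≤ E − (2hμ/J)E² + h²L²E³. -/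
open Matrix MeasureTheory RealInnerProductSpace Filter

/- ## Auxiliary lemmas -/

lemma psd_dot_nonneg {d : ℕ} {M : Matrix (Fin d) (Fin d) ℝ} (hM : M.PosSemidef) (x : Fin d → ℝ) :
    0 ≤ x ⬝ᵥ (M *ᵥ x) := by simpa using hM.dotProduct_mulVec_nonneg x

lemma dot_symm {d : ℕ} {M : Matrix (Fin d) (Fin d) ℝ} (hM : Mᵀ = M) (u v : Fin d → ℝ) :
    u ⬝ᵥ (M *ᵥ v) = v ⬝ᵥ (M *ᵥ u) := by
  rw [Matrix.dotProduct_mulVec, ← Matrix.mulVec_transpose, hM, dotProduct_comm]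

lemma smul_one_psd {d : ℕ} {μ : ℝ} (hμ : 0 ≤ μ) :
    ((μ • 1 : Matrix (Fin d) (Fin d) ℝ)).PosSemidef := by
  refine Matrix.PosSemidef.of_dotProduct_mulVec_nonneg ?_ ?_
  · simp [Matrix.IsHermitian, Matrix.conjTranspose_smul]
  · intro x
    have h1 : (μ • (1 : Matrix (Fin d) (Fin d) ℝ)) *ᵥ x = μ • x := by
      rw [Matrix.smul_mulVec, Matrix.one_mulVec]
    rw [h1]
    simp only [star_trivial, dotProduct_smul, smul_eq_mul]
    exact mul_nonneg hμ (Finset.sum_nonneg fun i _ => mul_self_nonneg (x i))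

lemma psd_cauchy {d : ℕ} {M : Matrix (Fin d) (Fin d) ℝ} (hM : M.PosSemidef) (u v : Fin d → ℝ) :
    (u ⬝ᵥ (M *ᵥ v))^2 ≤ (u ⬝ᵥ (M *ᵥ u)) * (v ⬝ᵥ (M *ᵥ v)) := by
  have hMs : Mᵀ = M := hM.1
  have key : discrim (v ⬝ᵥ (M *ᵥ v)) (2 * (u ⬝ᵥ (M *ᵥ v))) (u ⬝ᵥ (M *ᵥ u)) ≤ 0 := by
    apply discrim_le_zero
    intro t
    have h0 := psd_dot_nonneg hM (u + t • v)
    have hexp : (u + t • v) ⬝ᵥ (M *ᵥ (u + t • v)) =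
        (v ⬝ᵥ (M *ᵥ v)) * (t * t) + 2 * (u ⬝ᵥ (M *ᵥ v)) * t + (u ⬝ᵥ (M *ᵥ u)) := by
      simp only [Matrix.mulVec_add, Matrix.mulVec_smul, add_dotProduct, dotProduct_add,
        smul_dotProduct, dotProduct_smul, smul_eq_mul]
      rw [dot_symm hMs v u]
      ring
    linarith [hexp ▸ h0]
  rw [discrim] at key
  nlinarith [key]

/-- `‖S x‖² ≤ L² ‖x‖²` for `0 ⪯ S ⪯ L`. -/
lemma S_mulVec_sq_bound {d : ℕ} {S : Matrix (Fin d) (Fin d) ℝ} (hSpsd : S.PosSemidef)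
    {L : ℝ} (hL : 0 ≤ L) (hub : ∀ x : Fin d → ℝ, x ⬝ᵥ (S *ᵥ x) ≤ L * (x ⬝ᵥ x))
    (x : Fin d → ℝ) : (S *ᵥ x) ⬝ᵥ (S *ᵥ x) ≤ L^2 * (x ⬝ᵥ x) := by
  have hMs : Sᵀ = S := hSpsd.1
  set y := S *ᵥ x with hy
  have hcs := psd_cauchy hSpsd x y
  have hxy : x ⬝ᵥ (S *ᵥ y) = y ⬝ᵥ y := by
    rw [dot_symm hMs x y, hy]
  rw [hxy] at hcs
  have h1 := hub x
  have h2 := hub y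
  have hyn : 0 ≤ y ⬝ᵥ y := Finset.sum_nonneg fun i _ => mul_self_nonneg (y i)
  have hxn : 0 ≤ x ⬝ᵥ x := Finset.sum_nonneg fun i _ => mul_self_nonneg (x i)
  have hsy : 0 ≤ y ⬝ᵥ (S *ᵥ y) := psd_dot_nonneg hSpsd y
  have h3 : (y ⬝ᵥ y)^2 ≤ (L * (x ⬝ᵥ x)) * (L * (y ⬝ᵥ y)) :=
    le_trans hcs (mul_le_mul h1 h2 hsy (mul_nonneg hL hxn))
  rcases eq_or_lt_of_le hyn with h0 | h0
  · rw [← h0]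
    positivity
  · nlinarith [h3, h0]

/-- Frobenius bound `‖C v‖² ≤ tr(C C) ‖v‖²` for symmetric `C`. -/
lemma frob_bound {d : ℕ} (C : Matrix (Fin d) (Fin d) ℝ) (hCs : Cᵀ = C) (v : Fin d → ℝ) :
    (C *ᵥ v) ⬝ᵥ (C *ᵥ v) ≤ trace (C * C) * (v ⬝ᵥ v) := by
  have htr : trace (C * C) = ∑ i, ∑ k, (C i k)^2 := by
    simp only [trace, Matrix.mul_apply, diag, sq]
    refine Finset.sum_congr rfl fun i _ => Finset.sum_congr rfl fun k _ => ?_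
    have h2 : C k i = C i k := by
      have := congrFun (congrFun hCs i) k
      simpa [Matrix.transpose_apply] using this
    rw [h2]
  rw [htr, Finset.sum_mul]
  simp only [dotProduct, mulVec]
  refine Finset.sum_le_sum fun i _ => ?_
  have hcs := Finset.sum_mul_sq_le_sq_mul_sq Finset.univ (fun k => C i k) v
  calc (fun k => C i k) ⬝ᵥ v * ((fun k => C i k) ⬝ᵥ v)
      = (∑ k, C i k * v k)^2 := by rw [sq]; rfl
    _ ≤ (∑ k, (C i k)^2) * (∑ k, (v k)^2) := hcs
    _ = (∑ k, (C i k)^2) * (v ⬝ᵥ v) := by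
        congr 1; simp [dotProduct, sq]

lemma trace_mul_vecMulVec {d : ℕ} (M : Matrix (Fin d) (Fin d) ℝ) (a : Fin d → ℝ) :
    trace (M * vecMulVec a a) = a ⬝ᵥ (M *ᵥ a) := by
  simp [trace, Matrix.mul_apply, vecMulVec, dotProduct, diag, mulVec, Finset.sum_mul,
    Finset.mul_sum]
  congr 1; ext i; congr 1; ext k; ring

lemma trace_vecMulVec_mul_vecMulVec {d : ℕ} (a b : Fin d → ℝ) :
    trace (vecMulVec a a * vecMulVec b b) = (a ⬝ᵥ b)^2 := by
  rw [trace_mul_vecMulVec]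
  simp only [vecMulVec, mulVec, dotProduct, of_apply, sq, Finset.mul_sum, Finset.sum_mul]
  rw [Finset.sum_comm]
  congr 1; ext i; congr 1; ext k; ring

/-- `tr(C M C) ≥ 0` for `M` PSD, `C` symmetric. -/
lemma trace_conj_nonneg {d : ℕ} {M : Matrix (Fin d) (Fin d) ℝ} (hM : M.PosSemidef)
    (C : Matrix (Fin d) (Fin d) ℝ) (hCs : Cᵀ = C) : 0 ≤ trace (C * M * C) := by
  have hpsd : (C * M * Cᴴ).PosSemidef := hM.mul_mul_conjTranspose_same C
  have hCh : Cᴴ = C := by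
    rw [conjTranspose_eq_transpose_of_trivial, hCs]
  rw [hCh] at hpsd
  rw [trace]
  refine Finset.sum_nonneg fun i _ => ?_
  have := psd_dot_nonneg hpsd (Pi.single i 1)
  simpa [dotProduct, mulVec, Pi.single_apply, diag] using this

lemma inner_eq_dot {d : ℕ} (x y : EuclideanSpace ℝ (Fin d)) :
    ⟪x, y⟫ = dotProduct (x : Fin d → ℝ) (y : Fin d → ℝ) := by
  simp [PiLp.inner_apply, dotProduct, RCLike.inner_apply, mul_comm]

lemma normsq_eq_dot {d : ℕ} (x : EuclideanSpace ℝ (Fin d)) :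
    ‖x‖^2 = dotProduct (x : Fin d → ℝ) (x : Fin d → ℝ) := by
  rw [← real_inner_self_eq_norm_sq]; exact inner_eq_dot x x

set_option maxHeartbeats 1600000 in
/-- one-step ensemble-spread inequality
`E' ≤ E - (2hμ/J)E² + h²L²E³`. -/
theorem stmt14 {d J : ℕ} (hJ : 0 < J) (S : Matrix (Fin d) (Fin d) ℝ) (hS : S.IsSymm)
    (μ L : ℝ) (hμ : 0 < μ) (hμL : μ ≤ L)
    (hSl : (S - μ • 1).PosSemidef)
    (hSu : ((L • 1 : Matrix (Fin d) (Fin d) ℝ) - S).PosSemidef)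
    (e e' : Fin J → EuclideanSpace ℝ (Fin d)) (h : ℝ) (hh : 0 < h)
    (C : Matrix (Fin d) (Fin d) ℝ)
    (hC : C = (J : ℝ)⁻¹ • ∑ j, vecMulVec (fun i => e j i) (fun i => e j i))
    (En En' : ℝ) (hEn : En = (J : ℝ)⁻¹ * ∑ j, ‖e j‖ ^ 2)
    (he' : ∀ j, e' j = e j - h • mulVecE (C * S) (e j))
    (hEn' : En' = (J : ℝ)⁻¹ * ∑ j, ‖e' j‖ ^ 2) :
    En' ≤ En - (2 * h * μ / J) * En ^ 2 + h ^ 2 * L ^ 2 * En ^ 3 := by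
  have hJ' : (J : ℝ) ≠ 0 := Nat.cast_ne_zero.mpr hJ.ne'
  have hJpos : (0:ℝ) < J := Nat.cast_pos.mpr hJ
  have hL0 : 0 ≤ L := le_trans hμ.le hμL
  set v : Fin J → (Fin d → ℝ) := fun j => e j with hv
  -- symmetry of C
  have hCs : Cᵀ = C := by
    rw [hC]
    ext i k
    simp [Matrix.transpose_apply, vecMulVec_apply, Matrix.smul_apply, Matrix.sum_apply, mul_comm]
  -- D = sum of outer products
  set D : Matrix (Fin d) (Fin d) ℝ := ∑ j, vecMulVec (v j) (v j) with hD
  have hCD : C = (J : ℝ)⁻¹ • D := hC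
  have hDC : D = (J : ℝ) • C := by
    rw [hCD, smul_smul, mul_inv_cancel₀ hJ', one_smul]
  -- squared norms
  set n : Fin J → ℝ := fun j => (v j) ⬝ᵥ (v j) with hn
  have hnnonneg : ∀ j, 0 ≤ n j := fun j => Finset.sum_nonneg fun i _ => mul_self_nonneg _
  set N : ℝ := ∑ j, n j with hN
  have hNnonneg : 0 ≤ N := Finset.sum_nonneg fun j _ => hnnonneg j
  have hEnN : En = (J : ℝ)⁻¹ * N := by
    rw [hEn, hN]
    congr 1
    exact Finset.sum_congr rfl fun j _ => normsq_eq_dot (e j)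
  have hEnnonneg : 0 ≤ En := by rw [hEnN]; positivity
  -- Frobenius norm squared of C, and the sandwich
  set F : ℝ := trace (C * C) with hF
  set G : ℝ := ∑ j, ∑ k, ((v j) ⬝ᵥ (v k))^2 with hG
  have hFG : F = ((J:ℝ)⁻¹ * (J:ℝ)⁻¹) * G := by
    have hCC : C * C = ((J:ℝ)⁻¹ * (J:ℝ)⁻¹) • (D * D) := by
      rw [hCD, Matrix.smul_mul, Matrix.mul_smul, smul_smul]
    have hDD : trace (D * D) = G := by
      rw [hD, hG, Finset.sum_mul_sum]
      rw [Matrix.trace_sum]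
      refine Finset.sum_congr rfl fun j _ => ?_
      rw [Matrix.trace_sum]
      exact Finset.sum_congr rfl fun k _ => trace_vecMulVec_mul_vecMulVec (v j) (v k)
    rw [hF, hCC, Matrix.trace_smul, smul_eq_mul, hDD]
  have hGup : G ≤ N^2 := by
    have : N^2 = ∑ j, ∑ k, n j * n k := by
      rw [sq, hN, Finset.sum_mul_sum]
    rw [this, hG]
    refine Finset.sum_le_sum fun j _ => Finset.sum_le_sum fun k _ => ?_
    have hcs := Finset.sum_mul_sq_le_sq_mul_sq Finset.univ (v j) (v k)
    calc ((v j) ⬝ᵥ (v k))^2 = (∑ i, v j i * v k i)^2 := rfl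
      _ ≤ (∑ i, (v j i)^2) * (∑ i, (v k i)^2) := hcs
      _ = n j * n k := by rw [hn]; congr 1 <;> simp [dotProduct, sq]
  have hGlow : N^2 ≤ (J:ℝ) * G := by
    have h1 : N^2 ≤ (J:ℝ) * ∑ j, (n j)^2 := by
      have := sq_sum_le_card_mul_sum_sq (s := (Finset.univ : Finset (Fin J))) (f := n)
      simpa using this
    refine le_trans h1 (mul_le_mul_of_nonneg_left ?_ hJpos.le)
    refine Finset.sum_le_sum fun j _ => ?_
    exact Finset.single_le_sum (f := fun k => ((v j) ⬝ᵥ (v k))^2)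
      (fun k _ => sq_nonneg _) (Finset.mem_univ j)
  have hGnonneg : 0 ≤ G := Finset.sum_nonneg fun j _ => Finset.sum_nonneg fun k _ => sq_nonneg _
  have hFnonneg : 0 ≤ F := by rw [hFG]; positivity
  have hFup : F ≤ En^2 := by
    have h2 : ((J:ℝ)⁻¹ * (J:ℝ)⁻¹) * G ≤ ((J:ℝ)⁻¹ * (J:ℝ)⁻¹) * N^2 :=
      mul_le_mul_of_nonneg_left hGup (by positivity)
    calc F = ((J:ℝ)⁻¹ * (J:ℝ)⁻¹) * G := hFG
      _ ≤ ((J:ℝ)⁻¹ * (J:ℝ)⁻¹) * N^2 := h2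
      _ = En^2 := by rw [hEnN]; ring
  have hFlowEn : En^2 ≤ (J:ℝ) * F := by
    have h2 : ((J:ℝ)⁻¹ * (J:ℝ)⁻¹ * (J:ℝ)⁻¹) * N^2 ≤ ((J:ℝ)⁻¹ * (J:ℝ)⁻¹ * (J:ℝ)⁻¹) * ((J:ℝ) * G) :=
      mul_le_mul_of_nonneg_left hGlow (by positivity)
    calc En^2 = ((J:ℝ)⁻¹ * (J:ℝ)⁻¹ * (J:ℝ)⁻¹) * ((J:ℝ) * N^2) := by
          rw [hEnN]; field_simp
      _ = (J:ℝ) * (((J:ℝ)⁻¹ * (J:ℝ)⁻¹ * (J:ℝ)⁻¹) * N^2) := by ring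
      _ ≤ (J:ℝ) * (((J:ℝ)⁻¹ * (J:ℝ)⁻¹ * (J:ℝ)⁻¹) * ((J:ℝ) * G)) :=
          mul_le_mul_of_nonneg_left h2 hJpos.le
      _ = (J:ℝ) * (((J:ℝ)⁻¹ * (J:ℝ)⁻¹) * G) := by field_simp
      _ = (J:ℝ) * F := by rw [hFG]
  -- S facts
  have hSpsd : S.PosSemidef := by
    have := hSl.add (smul_one_psd (d := d) hμ.le)
    simpa using this
  have hub : ∀ x : Fin d → ℝ, x ⬝ᵥ (S *ᵥ x) ≤ L * (x ⬝ᵥ x) := by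
    intro x
    have h0 := psd_dot_nonneg hSu x
    have hex : ((L • 1 : Matrix (Fin d) (Fin d) ℝ) - S) *ᵥ x = L • x - S *ᵥ x := by
      rw [Matrix.sub_mulVec, Matrix.smul_mulVec, Matrix.one_mulVec]
    rw [hex, dotProduct_sub, dotProduct_smul, smul_eq_mul] at h0
    linarith
  -- T1: lower bound
  set T1 : ℝ := ∑ j, (v j) ⬝ᵥ ((C * S) *ᵥ (v j)) with hT1
  have hT1tr : T1 = (J:ℝ) * trace (C * S * C) := by
    have htr : trace (C * S * D) = T1 := by
      rw [hD, hT1, Matrix.mul_sum, Matrix.trace_sum]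
      exact Finset.sum_congr rfl fun j _ => trace_mul_vecMulVec (C * S) (v j)
    rw [← htr, hDC, Matrix.mul_smul, Matrix.trace_smul, smul_eq_mul, Matrix.mul_assoc]
  have htrCSC : μ * F ≤ trace (C * S * C) := by
    have hdecomp : C * (S - μ • 1) * C = C * S * C - μ • (C * C) := by
      rw [Matrix.mul_sub, Matrix.sub_mul, Matrix.mul_smul, Matrix.mul_one, Matrix.smul_mul]
    have h0 := trace_conj_nonneg hSl C hCs
    rw [hdecomp, Matrix.trace_sub, Matrix.trace_smul, smul_eq_mul] at h0
    rw [hF]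
    linarith
  have hT1low : μ * En^2 ≤ T1 := by
    rw [hT1tr]
    calc μ * En^2 ≤ μ * ((J:ℝ) * F) := mul_le_mul_of_nonneg_left hFlowEn hμ.le
      _ = (J:ℝ) * (μ * F) := by ring
      _ ≤ (J:ℝ) * trace (C * S * C) := mul_le_mul_of_nonneg_left htrCSC hJpos.le
  -- T2: upper bound
  set T2 : ℝ := ∑ j, ((C * S) *ᵥ (v j)) ⬝ᵥ ((C * S) *ᵥ (v j)) with hT2
  have hT2up : T2 ≤ F * L^2 * N := by
    have : F * L^2 * N = ∑ j, F * L^2 * n j := by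
      rw [hN, Finset.mul_sum]
    rw [this, hT2]
    refine Finset.sum_le_sum fun j _ => ?_
    have hx : (C * S) *ᵥ (v j) = C *ᵥ (S *ᵥ (v j)) := (Matrix.mulVec_mulVec _ _ _).symm
    rw [hx]
    calc (C *ᵥ (S *ᵥ v j)) ⬝ᵥ (C *ᵥ (S *ᵥ v j))
        ≤ trace (C * C) * ((S *ᵥ v j) ⬝ᵥ (S *ᵥ v j)) := frob_bound C hCs _
      _ = F * ((S *ᵥ v j) ⬝ᵥ (S *ᵥ v j)) := by rw [hF]
      _ ≤ F * (L^2 * ((v j) ⬝ᵥ (v j))) :=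
          mul_le_mul_of_nonneg_left (S_mulVec_sq_bound hSpsd hL0 hub (v j)) hFnonneg
      _ = F * L^2 * n j := by rw [hn]; ring
  -- expansion of the squared norms
  have hexp : ∀ j, ‖e' j‖^2 = n j - 2*h*((v j) ⬝ᵥ ((C * S) *ᵥ (v j)))
      + h^2 * (((C * S) *ᵥ (v j)) ⬝ᵥ ((C * S) *ᵥ (v j))) := by
    intro j
    have h1 : ⟪e j, h • mulVecE (C * S) (e j)⟫ = h * ((v j) ⬝ᵥ ((C * S) *ᵥ (v j))) := by
      rw [real_inner_smul_right, inner_eq_dot]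
      rfl
    have h2 : ‖h • mulVecE (C * S) (e j)‖^2
        = h^2 * (((C * S) *ᵥ (v j)) ⬝ᵥ ((C * S) *ᵥ (v j))) := by
      rw [norm_smul, mul_pow, Real.norm_eq_abs, sq_abs, normsq_eq_dot]
      rfl
    rw [he' j, norm_sub_sq_real, h1, h2, normsq_eq_dot]
    ring
  have hEn'eq : En' = (J:ℝ)⁻¹ * (N - 2*h*T1 + h^2*T2) := by
    rw [hEn']
    congr 1
    calc ∑ j, ‖e' j‖^2
        = ∑ j, (n j - 2*h*((v j) ⬝ᵥ ((C * S) *ᵥ (v j)))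
            + h^2 * (((C * S) *ᵥ (v j)) ⬝ᵥ ((C * S) *ᵥ (v j)))) :=
          Finset.sum_congr rfl fun j _ => hexp j
      _ = N - 2*h*T1 + h^2*T2 := by
          rw [Finset.sum_add_distrib, Finset.sum_sub_distrib, hN, hT1, hT2,
            ← Finset.mul_sum, ← Finset.mul_sum]
  -- final assembly
  have key1 : (2 * h * μ / (J:ℝ)) * En^2 ≤ 2*h*(J:ℝ)⁻¹*T1 := by
    have := mul_le_mul_of_nonneg_left hT1low (by positivity : (0:ℝ) ≤ 2*h*(J:ℝ)⁻¹)
    calc (2 * h * μ / (J:ℝ)) * En^2 = 2*h*(J:ℝ)⁻¹*(μ * En^2) := by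
          field_simp
      _ ≤ 2*h*(J:ℝ)⁻¹*T1 := this
  have key2 : h^2*(J:ℝ)⁻¹*T2 ≤ h^2 * L^2 * En^3 := by
    have s1 : h^2*(J:ℝ)⁻¹*T2 ≤ h^2*(J:ℝ)⁻¹*(F * L^2 * N) :=
      mul_le_mul_of_nonneg_left hT2up (by positivity)
    have s2 : h^2*(J:ℝ)⁻¹*(F * L^2 * N) = h^2 * L^2 * (F * En) := by
      rw [hEnN]; ring
    have s3 : F * En ≤ En^2 * En := mul_le_mul_of_nonneg_right hFup hEnnonneg
    calc h^2*(J:ℝ)⁻¹*T2 ≤ h^2*(J:ℝ)⁻¹*(F * L^2 * N) := s1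
      _ = h^2 * L^2 * (F * En) := s2
      _ ≤ h^2 * L^2 * (En^2 * En) := mul_le_mul_of_nonneg_left s3 (by positivity)
      _ = h^2 * L^2 * En^3 := by ring
  have hsplit : En' = En - 2*h*(J:ℝ)⁻¹*T1 + h^2*(J:ℝ)⁻¹*T2 := by
    rw [hEn'eq, hEnN]; ring
  rw [hsplit]
  linarith [key1, key2]
end
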